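/- Let A_ρ ⊆ M_n(ℂ) be a structural matrix algebra such that every central class of A_ρ has at least 2 elements, and let φ : A_ρ → M_n(ℂ) be an injective map satisfying φ(X ∘ Y) = φ(X) ∘ φ(Y) for all X, Y ∈ A_ρ, where X ∘ Y = (1/2)(XY + YX). Then there exist an invertible matrix T ∈ M_n(ℂ), a transitive map g : ρ → ℂ^×, for each central class C an injective ring homomorphism ω_C : ℂ → ℂ, and for each central class C a choice ε_C ∈ {identity, transpose}, such that for every X ∈ A_ρ, φ(X) = T · g*( Σ_C (ω_C(P_C X))^{ε_C} ) · T⁻¹, where for a matrix Y supported in ρ, g*(Y) is the matrix with entries g(i,j)·Y_{ij} on ρ and 0 elsewhere, ω_C is applied entrywise, P_C = Σ_{i∈C} E_{ii}, and Y^{ε_C} is Y or its transpose according to ε_C. -/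

import Mathlib

/-- The structural matrix algebra determined by a quasi-order `ρ` on `Fin n`. -/
def structuralMatrixAlgebra {n : ℕ} (ρ : Fin n → Fin n → Prop) :
    Set (Matrix (Fin n) (Fin n) ℂ) :=
  {X | ∀ i j, ¬ ρ i j → X i j = 0}

/-- The equivalence relation `≈` whose classes are the central classes of `A_ρ`:
the reflexive-transitive closure of `i ≈₀ j ⟺ (i,j) ∈ ρ ∨ (j,i) ∈ ρ`. -/
def centralRel {n : ℕ} (ρ : Fin n → Fin n → Prop) : Fin n → Fin n → Prop :=
  Relation.ReflTransGen (fun a b => ρ a b ∨ ρ b a)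

/-- The normalized Jordan product `X ∘ Y = (1/2)(XY + YX)`. -/
noncomputable def njord {n : ℕ} (X Y : Matrix (Fin n) (Fin n) ℂ) : Matrix (Fin n) (Fin n) ℂ :=
  (1 / 2 : ℂ) • (X * Y + Y * X)

namespace NJMS

open Matrix

set_option linter.unusedVariables false
set_option linter.unreachableTactic false
set_option linter.unusedTactic false

variable {n : ℕ}

/-- abbreviation for scaled matrix units -/
noncomputable abbrev E (i j : Fin n) (c : ℂ) : Matrix (Fin n) (Fin n) ℂ :=
  Matrix.single i j c

lemma E_apply (i j : Fin n) (c : ℂ) (p q : Fin n) :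
    E i j c p q = if i = p ∧ j = q then c else 0 := by
  simp [Matrix.single, Matrix.of_apply]

lemma mul_E_apply (A : Matrix (Fin n) (Fin n) ℂ) (i j : Fin n) (c : ℂ) (p q : Fin n) :
    (A * E i j c) p q = if j = q then A p i * c else 0 := by
  rw [Matrix.mul_apply]
  by_cases h : j = q
  · subst h
    rw [if_pos rfl, Finset.sum_eq_single i]
    · simp [E_apply]
    · intro b _ hb; simp [E_apply, hb, Ne.symm hb]
    · simp
  · rw [if_neg h, Finset.sum_eq_zero]
    intro b _; simp [E_apply, h]

lemma E_mul_apply (A : Matrix (Fin n) (Fin n) ℂ) (i j : Fin n) (c : ℂ) (p q : Fin n) :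
    (E i j c * A) p q = if i = p then c * A j q else 0 := by
  rw [Matrix.mul_apply]
  by_cases h : i = p
  · subst h
    rw [if_pos rfl, Finset.sum_eq_single j]
    · simp [E_apply]
    · intro b _ hb; simp [E_apply, hb, Ne.symm hb]
    · simp
  · rw [if_neg h, Finset.sum_eq_zero]
    intro b _; simp [E_apply, h]

lemma njord_apply (X Y : Matrix (Fin n) (Fin n) ℂ) (p q : Fin n) :
    njord X Y p q = (1/2 : ℂ) * ((X * Y) p q + (Y * X) p q) := by
  simp [njord, Matrix.smul_apply, Matrix.add_apply]

lemma njord_comm (X Y : Matrix (Fin n) (Fin n) ℂ) : njord X Y = njord Y X := by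
  simp [njord, add_comm]

lemma njord_self (X : Matrix (Fin n) (Fin n) ℂ) : njord X X = X * X := by
  simp [njord]; module

variable {ρ : Fin n → Fin n → Prop}

lemma zero_mem_S : (0 : Matrix (Fin n) (Fin n) ℂ) ∈ structuralMatrixAlgebra ρ := by
  intro i j _; rfl

lemma E_mem_S (i j : Fin n) (c : ℂ) (h : ρ i j) : E i j c ∈ structuralMatrixAlgebra ρ := by
  intro p q hpq
  rw [E_apply]
  split_ifs with h'
  · exact absurd (h'.1 ▸ h'.2 ▸ h) hpq
  · rfl

lemma add_mem_S {X Y : Matrix (Fin n) (Fin n) ℂ}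
    (hX : X ∈ structuralMatrixAlgebra ρ) (hY : Y ∈ structuralMatrixAlgebra ρ) :
    X + Y ∈ structuralMatrixAlgebra ρ := by
  intro i j h
  rw [Matrix.add_apply, hX i j h, hY i j h, add_zero]

lemma mul_mem_S (htrans : ∀ i j k, ρ i j → ρ j k → ρ i k)
    {X Y : Matrix (Fin n) (Fin n) ℂ}
    (hX : X ∈ structuralMatrixAlgebra ρ) (hY : Y ∈ structuralMatrixAlgebra ρ) :
    X * Y ∈ structuralMatrixAlgebra ρ := by
  intro i j h
  rw [Matrix.mul_apply]
  apply Finset.sum_eq_zero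
  intro k _
  by_cases hik : ρ i k
  · rw [hY k j (fun hkj => h (htrans i k j hik hkj)), mul_zero]
  · rw [hX i k hik, zero_mul]

lemma njord_mem_S (htrans : ∀ i j k, ρ i j → ρ j k → ρ i k)
    {X Y : Matrix (Fin n) (Fin n) ℂ}
    (hX : X ∈ structuralMatrixAlgebra ρ) (hY : Y ∈ structuralMatrixAlgebra ρ) :
    njord X Y ∈ structuralMatrixAlgebra ρ := by
  intro i j h
  rw [njord, Matrix.smul_apply, Matrix.add_apply,
    mul_mem_S htrans hX hY i j h, mul_mem_S htrans hY hX i j h, add_zero, smul_zero]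

lemma E_mul_E (i j k l : Fin n) (c d : ℂ) :
    E i j c * E k l d = if j = k then E i l (c * d) else 0 := by
  ext p q
  rw [E_mul_apply]
  by_cases h : j = k
  · subst h
    simp only [if_pos rfl, E_apply]
    split_ifs with h1 h2 h2 <;> simp_all <;> ring
  · simp only [if_neg h, E_apply, Matrix.zero_apply]
    split_ifs with h1 <;> simp_all [h]

lemma njord_E_E (i j k l : Fin n) (c d : ℂ) :
    njord (E i j c) (E k l d) =
      (1/2 : ℂ) • ((if j = k then E i l (c * d) else 0) + (if l = i then E k j (d * c) else 0)) := by
  rw [njord, E_mul_E, E_mul_E]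

lemma smul_E (r : ℂ) (i j : Fin n) (c : ℂ) : r • E i j c = E i j (r * c) := by
  ext p q
  rw [Matrix.smul_apply, E_apply, E_apply]
  split_ifs <;> simp

lemma G0 {i j k l : Fin n} (h1 : j ≠ k) (h2 : l ≠ i) (c d : ℂ) :
    njord (E i j c) (E k l d) = 0 := by
  rw [njord_E_E, if_neg h1, if_neg h2, add_zero, smul_zero]

lemma G1 {i j l : Fin n} (h : l ≠ i) (c d : ℂ) :
    njord (E i j c) (E j l d) = E i l (c * d / 2) := by
  rw [njord_E_E, if_pos rfl, if_neg h, add_zero, smul_E]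
  ring_nf

lemma G2 {i j k : Fin n} (h : k ≠ j) (c d : ℂ) :
    njord (E i j c) (E k i d) = E k j (c * d / 2) := by
  rw [njord_E_E, if_neg (Ne.symm h), if_pos rfl, zero_add, smul_E]
  ring_nf

lemma G3 {i j : Fin n} (h : i ≠ j) (c d : ℂ) :
    njord (E i j c) (E j i d) = E i i (c * d / 2) + E j j (c * d / 2) := by
  rw [njord_E_E, if_pos rfl, if_pos rfl, smul_add, smul_E, smul_E]
  ring_nf

lemma G4 (i : Fin n) (c d : ℂ) : njord (E i i c) (E i i d) = E i i (c * d) := by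
  rw [njord_E_E, if_pos rfl, if_pos rfl, smul_add, smul_E, smul_E]
  ext p q
  rw [Matrix.add_apply, E_apply, E_apply, E_apply]
  split_ifs <;> ring

lemma njord_unit_apply (i : Fin n) (A : Matrix (Fin n) (Fin n) ℂ) (p q : Fin n) :
    njord (E i i 1) A p q =
      (1/2 : ℂ) * ((if i = p then A i q else 0) + (if i = q then A p i else 0)) := by
  rw [njord_apply, E_mul_apply, mul_E_apply]
  split_ifs <;> ring

lemma H2 {i j : Fin n} (h : i ≠ j) (A : Matrix (Fin n) (Fin n) ℂ) :
    njord (E i i 1) (njord (E j j 1) A) =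
      E i j (A i j / 4) + E j i (A j i / 4) := by
  ext p q
  rw [njord_unit_apply]
  rw [Matrix.add_apply, E_apply, E_apply]
  by_cases h1 : i = p <;> by_cases h2 : i = q <;>
    simp only [if_pos, if_neg, h1, h2, njord_unit_apply] <;> split_ifs <;> simp_all <;> ring

lemma H3a {i j : Fin n} (h : i ≠ j) (A : Matrix (Fin n) (Fin n) ℂ) (c : ℂ) :
    njord A (E i j c) i j = (1/2 : ℂ) * c * (A i i + A j j) := by
  rw [njord_apply, mul_E_apply, E_mul_apply, if_pos rfl, if_pos rfl]
  ring

lemma H3b {i j : Fin n} (h : i ≠ j) (A : Matrix (Fin n) (Fin n) ℂ) (c : ℂ) :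
    njord A (E i j c) j i = 0 := by
  rw [njord_apply, mul_E_apply, E_mul_apply, if_neg (fun hh => h hh.symm), if_neg h]
  ring

lemma kill_row {k : Fin n} {A : Matrix (Fin n) (Fin n) ℂ}
    (h : njord (E k k 1) A = 0) (q : Fin n) : A k q = 0 := by
  have := congrFun (congrFun h k) q
  rw [njord_unit_apply, if_pos rfl, Matrix.zero_apply] at this
  by_cases hq : k = q
  · subst hq; simp at this; tauto
  · rw [if_neg hq, add_zero] at this; simpa using this

lemma kill_col {k : Fin n} {A : Matrix (Fin n) (Fin n) ℂ}
    (h : njord (E k k 1) A = 0) (p : Fin n) : A p k = 0 := by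
  have := congrFun (congrFun h p) k
  rw [njord_unit_apply, if_pos rfl, Matrix.zero_apply] at this
  by_cases hp : k = p
  · subst hp; simp at this; tauto
  · rw [if_neg hp, zero_add] at this; simpa using this

lemma njord_add_left (X Y Z : Matrix (Fin n) (Fin n) ℂ) :
    njord (X + Y) Z = njord X Z + njord Y Z := by
  simp only [njord, add_mul, mul_add]
  module

lemma njord_add_right (X Y Z : Matrix (Fin n) (Fin n) ℂ) :
    njord X (Y + Z) = njord X Y + njord X Z := by
  simp only [njord, add_mul, mul_add]
  module

lemma E_zero (i j : Fin n) : E i j (0:ℂ) = 0 := by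
  ext p q; rw [E_apply]; split_ifs <;> rfl

lemma E_ne_zero {i j : Fin n} {c : ℂ} (h : c ≠ 0) : E i j c ≠ 0 := by
  intro hE
  have := congrFun (congrFun hE i) j
  rw [E_apply, if_pos ⟨rfl, rfl⟩, Matrix.zero_apply] at this
  exact h this

/-- Bundle of hypotheses for the normalized map. -/
structure JPsi (ρ : Fin n → Fin n → Prop) : Type where
  ψ : Matrix (Fin n) (Fin n) ℂ → Matrix (Fin n) (Fin n) ℂ
  hrefl : ∀ i, ρ i i
  htrans : ∀ i j k, ρ i j → ρ j k → ρ i k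
  jord : ∀ X ∈ structuralMatrixAlgebra ρ, ∀ Y ∈ structuralMatrixAlgebra ρ,
    ψ (njord X Y) = njord (ψ X) (ψ Y)
  inj : Set.InjOn ψ (structuralMatrixAlgebra ρ)
  unit : ∀ i, ψ (E i i 1) = E i i 1
  zero : ψ 0 = 0

variable {ρ : Fin n → Fin n → Prop}

namespace JPsi

variable (J : JPsi ρ)

lemma inj' {X Y : Matrix (Fin n) (Fin n) ℂ} (hX : X ∈ structuralMatrixAlgebra ρ)
    (hY : Y ∈ structuralMatrixAlgebra ρ) (h : J.ψ X = J.ψ Y) : X = Y := J.inj hX hY h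

lemma psi_ne_zero {X : Matrix (Fin n) (Fin n) ℂ} (hX : X ∈ structuralMatrixAlgebra ρ)
    (h : X ≠ 0) : J.ψ X ≠ 0 := by
  intro h0
  exact h (J.inj' hX zero_mem_S (by rw [h0, J.zero]))

/-- the diagonal scalar functions -/
noncomputable def d (i : Fin n) (c : ℂ) : ℂ := J.ψ (E i i c) i i

lemma diag_shape (i : Fin n) (c : ℂ) : J.ψ (E i i c) = E i i (J.d i c) := by
  have hmem : E i i c ∈ structuralMatrixAlgebra ρ := E_mem_S _ _ _ (J.hrefl i)
  have kill : ∀ k, k ≠ i → njord (E k k 1) (J.ψ (E i i c)) = 0 := by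
    intro k hk
    have h0 : njord (E k k (1:ℂ)) (E i i c) = 0 := G0 hk (Ne.symm hk) 1 c
    have := J.jord (E k k 1) (E_mem_S _ _ _ (J.hrefl k)) (E i i c) hmem
    rw [h0, J.zero, J.unit] at this
    exact this.symm
  ext p q
  rw [E_apply]
  by_cases hip : i = p
  · by_cases hiq : i = q
    · rw [if_pos ⟨hip, hiq⟩, ← hip, ← hiq]; rfl
    · rw [if_neg (fun h => hiq h.2)]
      exact kill_col (kill q (fun h => hiq h.symm)) p
  · rw [if_neg (fun h => hip h.1)]
    exact kill_row (kill p (fun h => hip h.symm)) q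

lemma d_zero (i : Fin n) : J.d i 0 = 0 := by
  unfold d
  rw [E_zero, J.zero]
  rfl

lemma d_one (i : Fin n) : J.d i 1 = 1 := by
  unfold d
  rw [J.unit, E_apply, if_pos ⟨rfl, rfl⟩]

lemma d_mul (i : Fin n) (c e : ℂ) : J.d i (c * e) = J.d i c * J.d i e := by
  have hm : ∀ x : ℂ, E i i x ∈ structuralMatrixAlgebra ρ := fun x => E_mem_S _ _ _ (J.hrefl i)
  have := J.jord (E i i c) (hm c) (E i i e) (hm e)
  rw [G4, J.diag_shape, J.diag_shape, J.diag_shape, G4] at this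
  have := congrFun (congrFun this i) i
  rwa [E_apply, E_apply, if_pos ⟨rfl, rfl⟩, if_pos ⟨rfl, rfl⟩] at this

lemma d_inj (i : Fin n) {c e : ℂ} (h : J.d i c = J.d i e) : c = e := by
  have hm : ∀ x : ℂ, E i i x ∈ structuralMatrixAlgebra ρ := fun x => E_mem_S _ _ _ (J.hrefl i)
  have heq : J.ψ (E i i c) = J.ψ (E i i e) := by
    rw [J.diag_shape, J.diag_shape, h]
  have := J.inj' (hm c) (hm e) heq
  have := congrFun (congrFun this i) i
  rwa [E_apply, E_apply, if_pos ⟨rfl, rfl⟩, if_pos ⟨rfl, rfl⟩] at this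

/-- off-diagonal coefficient function -/
noncomputable def f (i j : Fin n) (c : ℂ) : ℂ := J.ψ (E i j c) i j + J.ψ (E i j c) j i

lemma offdiag_shape {i j : Fin n} (hij : ρ i j) (hne : i ≠ j) (c : ℂ) :
    J.ψ (E i j c) = E i j (J.ψ (E i j c) i j) + E j i (J.ψ (E i j c) j i) := by
  have hmem : E i j c ∈ structuralMatrixAlgebra ρ := E_mem_S _ _ _ hij
  set A := J.ψ (E i j c) with hA
  have kill : ∀ k, k ≠ i → k ≠ j → njord (E k k 1) A = 0 := by
    intro k hk1 hk2
    have h0 : njord (E k k (1:ℂ)) (E i j c) = 0 := G0 hk1 (Ne.symm hk2) 1 c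
    have := J.jord (E k k 1) (E_mem_S _ _ _ (J.hrefl k)) (E i j c) hmem
    rw [h0, J.zero, J.unit] at this
    exact this.symm
  have hii : njord (E i i 1) A = njord (E j j 1) A := by
    have e1 : njord (E i i (1:ℂ)) (E i j c) = E i j (c/2) := by
      rw [njord_comm, G2 hne]
      norm_num
    have e2 : njord (E j j (1:ℂ)) (E i j c) = E i j (c/2) := by
      rw [njord_comm, G1 (Ne.symm hne)]
      norm_num
    have h1 := J.jord (E i i 1) (E_mem_S _ _ _ (J.hrefl i)) (E i j c) hmem
    have h2 := J.jord (E j j 1) (E_mem_S _ _ _ (J.hrefl j)) (E i j c) hmem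
    rw [e1, J.unit] at h1
    rw [e2, J.unit] at h2
    rw [← h1, ← h2]
  have hAii : A i i = 0 := by
    have h1 := congrFun (congrFun hii i) i
    rw [njord_unit_apply, njord_unit_apply, if_pos rfl,
      if_neg (show ¬ (j = i) from Ne.symm hne), if_neg (show ¬ (j = i) from Ne.symm hne)] at h1
    linear_combination h1
  have hAjj : A j j = 0 := by
    have h1 := congrFun (congrFun hii j) j
    rw [njord_unit_apply, njord_unit_apply, if_pos rfl,
      if_neg (show ¬ (i = j) from hne), if_neg (show ¬ (i = j) from hne)] at h1
    linear_combination -h1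
  ext p q
  rw [Matrix.add_apply, E_apply, E_apply]
  by_cases hip : i = p
  · by_cases hjq : j = q
    · rw [if_pos ⟨hip, hjq⟩, if_neg (fun h => hne (hip.trans h.1.symm)), ← hip, ← hjq, add_zero]
    · rw [if_neg (fun h => hjq h.2), if_neg (fun h => hne (hip.trans h.1.symm))]
      by_cases hiq : i = q
      · rw [← hip, ← hiq, add_zero]; exact hAii
      · have := kill_col (kill q (fun h => hiq h.symm) (fun h => hjq h.symm)) p
        simpa using this
  · by_cases hjp : j = p
    · by_cases hiq : i = q
      · rw [if_neg (fun h => hip h.1), if_pos ⟨hjp, hiq⟩, ← hjp, ← hiq, zero_add]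
      · rw [if_neg (fun h => hip h.1), if_neg (fun h => hiq h.2)]
        by_cases hjq : j = q
        · rw [← hjp, ← hjq, add_zero]; exact hAjj
        · have := kill_col (kill q (fun h => hiq h.symm) (fun h => hjq h.symm)) p
          simpa using this
    · rw [if_neg (fun h => hip h.1), if_neg (fun h => hjp h.1)]
      have := kill_row (kill p (fun h => hip h.symm) (fun h => hjp h.symm)) q
      simpa using this

lemma offdiag_prod_zero {i j : Fin n} (hij : ρ i j) (hne : i ≠ j) (c : ℂ) :
    J.ψ (E i j c) i j * J.ψ (E i j c) j i = 0 := by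
  have hmem : E i j c ∈ structuralMatrixAlgebra ρ := E_mem_S _ _ _ hij
  have h0 : njord (E i j c) (E i j c) = 0 := G0 (Ne.symm hne) (Ne.symm hne) c c
  have := J.jord (E i j c) hmem (E i j c) hmem
  rw [h0, J.zero] at this
  have hsq : J.ψ (E i j c) * J.ψ (E i j c) = 0 := by
    rw [← njord_self]; exact this.symm
  rw [J.offdiag_shape hij hne c] at hsq
  rw [add_mul, mul_add, mul_add, E_mul_E, E_mul_E, E_mul_E, E_mul_E] at hsq
  rw [if_neg (Ne.symm hne), if_pos rfl, if_pos rfl, if_neg hne] at hsq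
  have h2 := congrFun (congrFun hsq i) i
  simpa [E_apply, (show j ≠ i from Ne.symm hne)] using h2

lemma njord_offdiag_offdiag {i j : Fin n} (hne : i ≠ j) (a b a' b' : ℂ) :
    njord (E i j a + E j i b) (E i j a' + E j i b') =
      E i i ((a * b' + a' * b)/2) + E j j ((a * b' + a' * b)/2) := by
  rw [njord_add_left, njord_add_right, njord_add_right,
    G0 (Ne.symm hne) (Ne.symm hne), G3 hne, G3 (Ne.symm hne), G0 hne hne]
  ext p q
  simp only [Matrix.add_apply, Matrix.zero_apply, E_apply]
  split_ifs <;> simp_all <;> ring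

lemma jorth (J : JPsi ρ) {X Y : Matrix (Fin n) (Fin n) ℂ}
    (hX : X ∈ structuralMatrixAlgebra ρ) (hY : Y ∈ structuralMatrixAlgebra ρ)
    (h : njord X Y = 0) : njord (J.ψ X) (J.ψ Y) = 0 := by
  have := J.jord X hX Y hY
  rw [h, J.zero] at this
  exact this.symm

/-- `Tr i j` means the edge `(i,j)` is of transpose type. -/
def Tr (i j : Fin n) : Prop := J.ψ (E i j 1) i j = 0

lemma tr_coeff {i j : Fin n} (hij : ρ i j) (hne : i ≠ j) (hT : J.Tr i j) :
    J.ψ (E i j 1) j i ≠ 0 := by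
  intro hb
  have h0 := J.psi_ne_zero (E_mem_S i j 1 hij) (E_ne_zero one_ne_zero)
  rw [J.offdiag_shape hij hne 1, hT, hb, E_zero, E_zero, add_zero] at h0
  exact h0 rfl

lemma id_coeff {i j : Fin n} (hij : ρ i j) (hne : i ≠ j) (hT : ¬ J.Tr i j) :
    J.ψ (E i j 1) j i = 0 := by
  have := J.offdiag_prod_zero hij hne 1
  rcases mul_eq_zero.mp this with h | h
  · exact absurd h hT
  · exact h

lemma cross_rel {i j : Fin n} (hij : ρ i j) (hne : i ≠ j) (c : ℂ) :
    J.ψ (E i j c) i j * J.ψ (E i j 1) j i + J.ψ (E i j 1) i j * J.ψ (E i j c) j i = 0 := by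
  have h0 : njord (E i j c) (E i j 1) = 0 := G0 (Ne.symm hne) (Ne.symm hne) c 1
  have := J.jorth (E_mem_S i j c hij) (E_mem_S i j 1 hij) h0
  rw [J.offdiag_shape hij hne c, J.offdiag_shape hij hne 1,
    njord_offdiag_offdiag hne] at this
  have h2 := congrFun (congrFun this i) i
  have h3 : (J.ψ (E i j c) i j * J.ψ (E i j 1) j i +
      J.ψ (E i j 1) i j * J.ψ (E i j c) j i)/2 = 0 := by
    simpa [Matrix.add_apply, E_apply, (show j ≠ i from Ne.symm hne)] using h2
  linear_combination 2 * h3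

lemma shape_tr {i j : Fin n} (hij : ρ i j) (hne : i ≠ j) (hT : J.Tr i j) (c : ℂ) :
    J.ψ (E i j c) = E j i (J.f i j c) := by
  have hib : J.ψ (E i j c) i j = 0 := by
    have := J.cross_rel hij hne c
    rw [hT, zero_mul, add_zero] at this
    rcases mul_eq_zero.mp this with h | h
    · exact h
    · exact absurd h (J.tr_coeff hij hne hT)
  rw [J.offdiag_shape hij hne c, hib, E_zero, zero_add]
  unfold f
  rw [hib, zero_add]

lemma shape_id {i j : Fin n} (hij : ρ i j) (hne : i ≠ j) (hT : ¬ J.Tr i j) (c : ℂ) :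
    J.ψ (E i j c) = E i j (J.f i j c) := by
  have hib : J.ψ (E i j c) j i = 0 := by
    have := J.cross_rel hij hne c
    rw [J.id_coeff hij hne hT, mul_zero, zero_add] at this
    rcases mul_eq_zero.mp this with h | h
    · exact absurd h hT
    · exact h
  rw [J.offdiag_shape hij hne c, hib, E_zero, add_zero]
  unfold f
  rw [hib, add_zero]

lemma f_zero (i j : Fin n) : J.f i j 0 = 0 := by
  unfold f
  rw [E_zero, J.zero]
  simp

lemma f_inj {i j : Fin n} (hij : ρ i j) (hne : i ≠ j) {c e : ℂ}
    (h : J.f i j c = J.f i j e) : c = e := by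
  have heq : J.ψ (E i j c) = J.ψ (E i j e) := by
    by_cases hT : J.Tr i j
    · rw [J.shape_tr hij hne hT, J.shape_tr hij hne hT, h]
    · rw [J.shape_id hij hne hT, J.shape_id hij hne hT, h]
  have := J.inj' (E_mem_S i j c hij) (E_mem_S i j e hij) heq
  have := congrFun (congrFun this i) j
  rwa [E_apply, E_apply, if_pos ⟨rfl, rfl⟩, if_pos ⟨rfl, rfl⟩] at this

lemma f_ne_zero {i j : Fin n} (hij : ρ i j) (hne : i ≠ j) {c : ℂ} (hc : c ≠ 0) :
    J.f i j c ≠ 0 := by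
  intro h
  exact hc (J.f_inj hij hne (h.trans (J.f_zero i j).symm))

lemma E_add_E (i j : Fin n) (x y : ℂ) : E i j x + E i j y = E i j (x + y) := by
  ext p q
  rw [Matrix.add_apply, E_apply, E_apply, E_apply]
  split_ifs <;> simp

lemma njord_unit_uv {u v k : Fin n} (huv : u ≠ v) (hk : k = u ∨ k = v) (x : ℂ) :
    njord (E k k 1) (E u v x) = E u v (x / 2) := by
  rcases hk with rfl | rfl
  · rw [njord_E_E, if_pos rfl, if_neg (Ne.symm huv), add_zero, smul_E]
    congr 1; ring
  · rw [njord_E_E, if_neg (Ne.symm huv), if_pos rfl, zero_add, smul_E]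
    congr 1; ring

lemma njord_diag_uv {u v k : Fin n} (huv : u ≠ v) (hk : k = u ∨ k = v) (y x : ℂ) :
    njord (E k k y) (E u v x) = E u v (y * x / 2) := by
  rcases hk with rfl | rfl
  · rw [njord_E_E, if_pos rfl, if_neg (Ne.symm huv), add_zero, smul_E]
    congr 1; ring
  · rw [njord_E_E, if_neg (Ne.symm huv), if_pos rfl, zero_add, smul_E]
    congr 1; ring

lemma njord_unit_other {u v k : Fin n} (hku : k ≠ u) (hkv : k ≠ v) (x : ℂ) :
    njord (E k k 1) (E u v x) = 0 :=
  G0 hku (fun h => hkv h.symm) 1 x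

lemma njord_uv_uv {u v : Fin n} (huv : u ≠ v) (x y : ℂ) :
    njord (E u v x) (E u v y) = 0 :=
  G0 (Ne.symm huv) (Ne.symm huv) x y

lemma njord_unit_eq_facts {k : Fin n} {R B : Matrix (Fin n) (Fin n) ℂ}
    (h : njord (E k k 1) R = B) :
    R k k = B k k ∧ (∀ q, q ≠ k → R k q = 2 * B k q) ∧ (∀ p, p ≠ k → R p k = 2 * B p k) := by
  refine ⟨?_, ?_, ?_⟩
  · have := congrFun (congrFun h k) k
    rw [njord_unit_apply, if_pos rfl] at this
    linear_combination this
  · intro q hq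
    have := congrFun (congrFun h k) q
    rw [njord_unit_apply, if_pos rfl, if_neg (fun hh => hq hh.symm)] at this
    linear_combination 2 * this
  · intro p hp
    have := congrFun (congrFun h p) k
    rw [njord_unit_apply, if_neg (fun hh => hp hh.symm), if_pos rfl] at this
    linear_combination 2 * this

lemma idem_lift {i j u v : Fin n} (hij : ρ i j) (hne : i ≠ j)
    (hs : (u = i ∧ v = j) ∨ (u = j ∧ v = i))
    (hsh : ∀ c, J.ψ (E i j c) = E u v (J.f i j c)) (c : ℂ) :
    J.ψ (E i i 1 + E i j c) = E i i 1 + E u v (2 * J.f i j (c/2)) := by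
  by_cases hc : c = 0
  · subst hc
    rw [E_zero, add_zero, J.unit]
    have h0 : (0:ℂ)/2 = 0 := by norm_num
    rw [h0, J.f_zero, mul_zero, E_zero, add_zero]
  · set V := E i i (1:ℂ) + E i j c with hV
    have hVmem : V ∈ structuralMatrixAlgebra ρ :=
      add_mem_S (E_mem_S _ _ _ (J.hrefl i)) (E_mem_S _ _ _ hij)
    have hVidem : njord V V = V := by
      rw [hV, njord_add_left, njord_add_right, njord_add_right, G4,
        njord_unit_uv hne (Or.inl rfl), njord_comm (E i j c) (E i i 1),
        njord_unit_uv hne (Or.inl rfl), njord_uv_uv hne, add_zero, add_assoc, E_add_E]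
      norm_num
    set R := J.ψ V with hRdef
    have hRidem : R * R = R := by
      have := J.jord V hVmem V hVmem
      rw [hVidem, njord_self] at this
      exact this.symm
    have hkill : ∀ k, k ≠ i → k ≠ j → njord (E k k 1) R = 0 := by
      intro k hk1 hk2
      have hsrc : njord (E k k (1:ℂ)) V = 0 := by
        rw [hV, njord_add_right, njord_unit_other hk1 hk1, njord_unit_other hk1 hk2, add_zero]
      have := J.jord _ (E_mem_S k k 1 (J.hrefl k)) V hVmem
      rw [hsrc, J.zero, J.unit] at this
      exact this.symm
    have hb : njord (E j j 1) R = E u v (J.f i j (c/2)) := by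
      have hsrc : njord (E j j (1:ℂ)) V = E i j (c/2) := by
        rw [hV, njord_add_right, njord_unit_other (Ne.symm hne) (Ne.symm hne), zero_add,
          njord_unit_uv hne (Or.inr rfl)]
      have := J.jord _ (E_mem_S j j 1 (J.hrefl j)) V hVmem
      rw [hsrc, J.unit, hsh] at this
      exact this.symm
    set w := J.f i j (c/2) with hw
    have hwne : w ≠ 0 := J.f_ne_zero hij hne (div_ne_zero hc two_ne_zero)
    obtain ⟨hb1, hb2, hb3⟩ := njord_unit_eq_facts hb
    rcases hs with ⟨rfl, rfl⟩ | ⟨rfl, rfl⟩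
    · -- identity case : source edge (u,v), target (u,v)
      have hRuv : R u v = 2 * w := by
        rw [hb3 u hne, E_apply, if_pos ⟨rfl, rfl⟩]
      have hRform : R = E u u (R u u) + E u v (2 * w) := by
        ext p q
        rw [Matrix.add_apply, E_apply, E_apply]
        by_cases hpu : u = p
        · by_cases hqu : u = q
          · rw [if_pos ⟨hpu, hqu⟩, if_neg (fun hh => hne (hh.2.trans hqu.symm).symm), add_zero,
              ← hpu, ← hqu]
          · by_cases hqv : v = q
            · rw [if_neg (fun hh => hqu hh.2), if_pos ⟨hpu, hqv⟩, zero_add, ← hpu, ← hqv]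
              exact hRuv
            · rw [if_neg (fun hh => hqu hh.2), if_neg (fun hh => hqv hh.2), add_zero]
              exact kill_col (hkill q (fun hh => hqu hh.symm) (fun hh => hqv hh.symm)) p
        · rw [if_neg (fun hh => hpu hh.1), if_neg (fun hh => hpu hh.1), add_zero]
          by_cases hpv : v = p
          · by_cases hqv : v = q
            · rw [← hpv, ← hqv, hb1, E_apply, if_neg (fun hh => hne hh.1)]
            · rw [← hpv, hb2 q (fun hh => hqv hh.symm), E_apply,
                if_neg (fun hh => hne hh.1), mul_zero]
          · exact kill_row (hkill p (fun hh => hpu hh.symm) (fun hh => hpv hh.symm)) q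
      have hRuu : R u u = 1 := by
        have h2 := hRidem
        rw [hRform, add_mul, mul_add, mul_add, E_mul_E, E_mul_E, E_mul_E, E_mul_E,
          if_pos (rfl : u = u), if_pos (rfl : u = u),
          if_neg (show ¬ (v = u) from Ne.symm hne), if_neg (show ¬ (v = u) from Ne.symm hne)] at h2
        have h3 := congrFun (congrFun h2 u) v
        simp only [Matrix.add_apply, Matrix.zero_apply, E_apply] at h3
        have h4 : R u u * (2 * w) = 2 * w := by
          simpa [hne] using h3
        have h5 : (R u u - 1) * (2 * w) = 0 := by linear_combination h4
        rcases mul_eq_zero.mp h5 with h6 | h6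
        · linear_combination h6
        · exact absurd h6 (mul_ne_zero two_ne_zero hwne)
      rw [hRform, hRuu]
    · -- transpose case : source edge (v,u), target (u,v)
      have hRuv : R u v = 2 * w := by
        rw [hb2 v hne, E_apply, if_pos ⟨rfl, rfl⟩]
      have hRform : R = E v v (R v v) + E u v (2 * w) := by
        ext p q
        rw [Matrix.add_apply, E_apply, E_apply]
        by_cases hqv : v = q
        · by_cases hpv : v = p
          · rw [if_pos ⟨hpv, hqv⟩, if_neg (fun hh => hne (hpv.trans hh.1.symm)), add_zero,
              ← hpv, ← hqv]
          · by_cases hpu : u = p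
            · rw [if_neg (fun hh => hpv hh.1), if_pos ⟨hpu, hqv⟩, zero_add, ← hpu, ← hqv]
              exact hRuv
            · rw [if_neg (fun hh => hpv hh.1), if_neg (fun hh => hpu hh.1), add_zero]
              exact kill_row (hkill p (fun hh => hpv hh.symm) (fun hh => hpu hh.symm)) q
        · rw [if_neg (fun hh => hqv hh.2), if_neg (fun hh => hqv hh.2), add_zero]
          by_cases hqu : u = q
          · by_cases hpu : u = p
            · rw [← hpu, ← hqu, hb1, E_apply, if_neg (fun hh => hne hh.2)]
            · rw [← hqu, hb3 p (fun hh => hpu hh.symm), E_apply,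
                if_neg (fun hh => hpu hh.1), mul_zero]
          · exact kill_col (hkill q (fun hh => hqv hh.symm) (fun hh => hqu hh.symm)) p
      have hRvv : R v v = 1 := by
        have h2 := hRidem
        rw [hRform, add_mul, mul_add, mul_add, E_mul_E, E_mul_E, E_mul_E, E_mul_E,
          if_pos (rfl : v = v), if_pos (rfl : v = v),
          if_neg (show ¬ (v = u) from hne), if_neg (show ¬ (v = u) from hne)] at h2
        have h3 := congrFun (congrFun h2 u) v
        simp only [Matrix.add_apply, Matrix.zero_apply, E_apply] at h3
        have h4 : 2 * w * R v v = 2 * w := by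
          simpa [hne, Ne.symm hne] using h3
        have h5 : (R v v - 1) * (2 * w) = 0 := by linear_combination h4
        rcases mul_eq_zero.mp h5 with h6 | h6
        · linear_combination h6
        · exact absurd h6 (mul_ne_zero two_ne_zero hwne)
      rw [hRform, hRvv]


lemma idem_lift' {i j u v : Fin n} (hij : ρ i j) (hne : i ≠ j)
    (hs : (u = i ∧ v = j) ∨ (u = j ∧ v = i))
    (hsh : ∀ c, J.ψ (E i j c) = E u v (J.f i j c)) (c : ℂ) :
    J.ψ (E j j 1 + E i j c) = E j j 1 + E u v (2 * J.f i j (c/2)) := by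
  by_cases hc : c = 0
  · subst hc
    rw [E_zero, add_zero, J.unit]
    have h0 : (0:ℂ)/2 = 0 := by norm_num
    rw [h0, J.f_zero, mul_zero, E_zero, add_zero]
  · set V := E j j (1:ℂ) + E i j c with hV
    have hVmem : V ∈ structuralMatrixAlgebra ρ :=
      add_mem_S (E_mem_S _ _ _ (J.hrefl j)) (E_mem_S _ _ _ hij)
    have hVidem : njord V V = V := by
      rw [hV, njord_add_left, njord_add_right, njord_add_right, G4,
        njord_unit_uv hne (Or.inr rfl), njord_comm (E i j c) (E j j 1),
        njord_unit_uv hne (Or.inr rfl), njord_uv_uv hne, add_zero, add_assoc, E_add_E]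
      norm_num
    set R := J.ψ V with hRdef
    have hRidem : R * R = R := by
      have := J.jord V hVmem V hVmem
      rw [hVidem, njord_self] at this
      exact this.symm
    have hkill : ∀ k, k ≠ i → k ≠ j → njord (E k k 1) R = 0 := by
      intro k hk1 hk2
      have hsrc : njord (E k k (1:ℂ)) V = 0 := by
        rw [hV, njord_add_right, njord_unit_other hk2 hk2, njord_unit_other hk1 hk2, add_zero]
      have := J.jord _ (E_mem_S k k 1 (J.hrefl k)) V hVmem
      rw [hsrc, J.zero, J.unit] at this
      exact this.symm
    have hb : njord (E i i 1) R = E u v (J.f i j (c/2)) := by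
      have hsrc : njord (E i i (1:ℂ)) V = E i j (c/2) := by
        rw [hV, njord_add_right, njord_unit_other hne hne, zero_add,
          njord_unit_uv hne (Or.inl rfl)]
      have := J.jord _ (E_mem_S i i 1 (J.hrefl i)) V hVmem
      rw [hsrc, J.unit, hsh] at this
      exact this.symm
    set w := J.f i j (c/2) with hw
    have hwne : w ≠ 0 := J.f_ne_zero hij hne (div_ne_zero hc two_ne_zero)
    obtain ⟨hb1, hb2, hb3⟩ := njord_unit_eq_facts hb
    rcases hs with ⟨rfl, rfl⟩ | ⟨rfl, rfl⟩
    · -- identity case : source edge (u,v), facts about row/col u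
      have hRuv : R u v = 2 * w := by
        rw [hb2 v (Ne.symm hne), E_apply, if_pos ⟨rfl, rfl⟩]
      have hRform : R = E v v (R v v) + E u v (2 * w) := by
        ext p q
        rw [Matrix.add_apply, E_apply, E_apply]
        by_cases hqv : v = q
        · by_cases hpv : v = p
          · rw [if_pos ⟨hpv, hqv⟩, if_neg (fun hh => hne (hh.1.trans hpv.symm)), add_zero,
              ← hpv, ← hqv]
          · by_cases hpu : u = p
            · rw [if_neg (fun hh => hpv hh.1), if_pos ⟨hpu, hqv⟩, zero_add, ← hpu, ← hqv]
              exact hRuv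
            · rw [if_neg (fun hh => hpv hh.1), if_neg (fun hh => hpu hh.1), add_zero]
              exact kill_row (hkill p (fun hh => hpu hh.symm) (fun hh => hpv hh.symm)) q
        · rw [if_neg (fun hh => hqv hh.2), if_neg (fun hh => hqv hh.2), add_zero]
          by_cases hqu : u = q
          · by_cases hpu : u = p
            · rw [← hpu, ← hqu, hb1, E_apply, if_neg (fun hh => hne hh.2.symm)]
            · rw [← hqu, hb3 p (fun hh => hpu hh.symm), E_apply,
                if_neg (fun hh => hpu hh.1), mul_zero]
          · exact kill_col (hkill q (fun hh => hqu hh.symm) (fun hh => hqv hh.symm)) p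
      have hRvv : R v v = 1 := by
        have h2 := hRidem
        rw [hRform, add_mul, mul_add, mul_add, E_mul_E, E_mul_E, E_mul_E, E_mul_E,
          if_pos (rfl : v = v), if_pos (rfl : v = v),
          if_neg (show ¬ (v = u) from Ne.symm hne), if_neg (show ¬ (v = u) from Ne.symm hne)] at h2
        have h3 := congrFun (congrFun h2 u) v
        simp only [Matrix.add_apply, Matrix.zero_apply, E_apply] at h3
        have h4 : 2 * w * R v v = 2 * w := by
          simpa [hne, Ne.symm hne] using h3
        have h5 : (R v v - 1) * (2 * w) = 0 := by linear_combination h4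
        rcases mul_eq_zero.mp h5 with h6 | h6
        · linear_combination h6
        · exact absurd h6 (mul_ne_zero two_ne_zero hwne)
      rw [hRform, hRvv]
    · -- transpose case : source edge (v,u), facts about row/col v
      have hRuv : R u v = 2 * w := by
        rw [hb3 u (Ne.symm hne), E_apply, if_pos ⟨rfl, rfl⟩]
      have hRform : R = E u u (R u u) + E u v (2 * w) := by
        ext p q
        rw [Matrix.add_apply, E_apply, E_apply]
        by_cases hpu : u = p
        · by_cases hqu : u = q
          · rw [if_pos ⟨hpu, hqu⟩, if_neg (fun hh => hne (hh.2.trans hqu.symm)), add_zero,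
              ← hpu, ← hqu]
          · by_cases hqv : v = q
            · rw [if_neg (fun hh => hqu hh.2), if_pos ⟨hpu, hqv⟩, zero_add, ← hpu, ← hqv]
              exact hRuv
            · rw [if_neg (fun hh => hqu hh.2), if_neg (fun hh => hqv hh.2), add_zero]
              exact kill_col (hkill q (fun hh => hqv hh.symm) (fun hh => hqu hh.symm)) p
        · rw [if_neg (fun hh => hpu hh.1), if_neg (fun hh => hpu hh.1), add_zero]
          by_cases hpv : v = p
          · by_cases hqv : v = q
            · rw [← hpv, ← hqv, hb1, E_apply, if_neg (fun hh => hne hh.1.symm)]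
            · rw [← hpv, hb2 q (fun hh => hqv hh.symm), E_apply,
                if_neg (fun hh => hqv hh.2), mul_zero]
          · exact kill_row (hkill p (fun hh => hpv hh.symm) (fun hh => hpu hh.symm)) q
      have hRuu : R u u = 1 := by
        have h2 := hRidem
        rw [hRform, add_mul, mul_add, mul_add, E_mul_E, E_mul_E, E_mul_E, E_mul_E,
          if_pos (rfl : u = u), if_pos (rfl : u = u),
          if_neg (show ¬ (v = u) from hne), if_neg (show ¬ (v = u) from hne)] at h2
        have h3 := congrFun (congrFun h2 u) v
        simp only [Matrix.add_apply, Matrix.zero_apply, E_apply] at h3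
        have h4 : R u u * (2 * w) = 2 * w := by
          simpa [hne, Ne.symm hne] using h3
        have h5 : (R u u - 1) * (2 * w) = 0 := by linear_combination h4
        rcases mul_eq_zero.mp h5 with h6 | h6
        · linear_combination h6
        · exact absurd h6 (mul_ne_zero two_ne_zero hwne)
      rw [hRform, hRuu]


lemma edge_struct {i j : Fin n} (hij : ρ i j) (hne : i ≠ j) :
    ∃ u v, ((u = i ∧ v = j) ∨ (u = j ∧ v = i)) ∧
      ∀ c, J.ψ (E i j c) = E u v (J.f i j c) := by
  by_cases hT : J.Tr i j
  · exact ⟨j, i, Or.inr ⟨rfl, rfl⟩, J.shape_tr hij hne hT⟩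
  · exact ⟨i, j, Or.inl ⟨rfl, rfl⟩, J.shape_id hij hne hT⟩

lemma f_add {i j u v : Fin n} (hij : ρ i j) (hne : i ≠ j)
    (hs : (u = i ∧ v = j) ∨ (u = j ∧ v = i))
    (hsh : ∀ c, J.ψ (E i j c) = E u v (J.f i j c)) (x y : ℂ) :
    J.f i j (x + y) = J.f i j x + J.f i j y := by
  have huv : u ≠ v := by
    rcases hs with ⟨rfl, rfl⟩ | ⟨rfl, rfl⟩
    · exact hne
    · exact Ne.symm hne
  have hiuv : i = u ∨ i = v := by
    rcases hs with ⟨h1, h2⟩ | ⟨h1, h2⟩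
    · exact Or.inl h1.symm
    · exact Or.inr h2.symm
  have hjuv : j = u ∨ j = v := by
    rcases hs with ⟨h1, h2⟩ | ⟨h1, h2⟩
    · exact Or.inr h2.symm
    · exact Or.inl h1.symm
  have key : ∀ c d : ℂ, J.f i j ((c+d)/2) = J.f i j (c/2) + J.f i j (d/2) := by
    intro c d
    have hVmem : (E i i (1:ℂ) + E i j c) ∈ structuralMatrixAlgebra ρ :=
      add_mem_S (E_mem_S _ _ _ (J.hrefl i)) (E_mem_S _ _ _ hij)
    have hWmem : (E j j (1:ℂ) + E i j d) ∈ structuralMatrixAlgebra ρ :=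
      add_mem_S (E_mem_S _ _ _ (J.hrefl j)) (E_mem_S _ _ _ hij)
    have hsrc : njord (E i i (1:ℂ) + E i j c) (E j j (1:ℂ) + E i j d) = E i j ((c+d)/2) := by
      rw [njord_add_left, njord_add_right, njord_add_right,
        njord_unit_other hne hne, njord_unit_uv hne (Or.inl rfl),
        njord_comm (E i j c) (E j j 1), njord_unit_uv hne (Or.inr rfl),
        njord_uv_uv hne, zero_add, add_zero, E_add_E]
      congr 1; ring
    have h1 := J.jord _ hVmem _ hWmem
    rw [hsrc, J.idem_lift hij hne hs hsh c, J.idem_lift' hij hne hs hsh d, hsh] at h1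
    rw [njord_add_left, njord_add_right, njord_add_right,
      njord_unit_other hne hne, njord_unit_uv huv hiuv,
      njord_comm (E u v (2 * J.f i j (c/2))) (E j j 1), njord_unit_uv huv hjuv,
      njord_uv_uv huv, zero_add, add_zero, E_add_E] at h1
    have h2 := congrFun (congrFun h1 u) v
    rw [E_apply, E_apply, if_pos ⟨rfl, rfl⟩, if_pos ⟨rfl, rfl⟩] at h2
    linear_combination h2
  have h3 := key (2*x) (2*y)
  have e1 : (2*x + 2*y)/2 = x + y := by ring
  have e2 : (2*x)/2 = x := by ring
  have e3 : (2*y)/2 = y := by ring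
  rwa [e1, e2, e3] at h3

lemma d_link {i j u v : Fin n} (hij : ρ i j) (hne : i ≠ j)
    (hs : (u = i ∧ v = j) ∨ (u = j ∧ v = i))
    (hsh : ∀ c, J.ψ (E i j c) = E u v (J.f i j c)) :
    (∀ c, J.f i j (c/2) = J.d i c * J.f i j 1 / 2) ∧
      (∀ c, J.f i j (c/2) = J.d j c * J.f i j 1 / 2) := by
  have huv : u ≠ v := by
    rcases hs with ⟨rfl, rfl⟩ | ⟨rfl, rfl⟩
    · exact hne
    · exact Ne.symm hne
  have hiuv : i = u ∨ i = v := by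
    rcases hs with ⟨h1, h2⟩ | ⟨h1, h2⟩
    · exact Or.inl h1.symm
    · exact Or.inr h2.symm
  have hjuv : j = u ∨ j = v := by
    rcases hs with ⟨h1, h2⟩ | ⟨h1, h2⟩
    · exact Or.inr h2.symm
    · exact Or.inl h1.symm
  constructor <;> intro c
  · have hsrc : njord (E i i c) (E i j 1) = E i j (c/2) := by
      rw [njord_diag_uv hne (Or.inl rfl)]
      congr 1; ring
    have h1 := J.jord _ (E_mem_S i i c (J.hrefl i)) _ (E_mem_S i j 1 hij)
    rw [hsrc, hsh, hsh, J.diag_shape, njord_diag_uv huv hiuv] at h1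
    have h2 := congrFun (congrFun h1 u) v
    rwa [E_apply, E_apply, if_pos ⟨rfl, rfl⟩, if_pos ⟨rfl, rfl⟩] at h2
  · have hsrc : njord (E j j c) (E i j 1) = E i j (c/2) := by
      rw [njord_diag_uv hne (Or.inr rfl)]
      congr 1; ring
    have h1 := J.jord _ (E_mem_S j j c (J.hrefl j)) _ (E_mem_S i j 1 hij)
    rw [hsrc, hsh, hsh, J.diag_shape, njord_diag_uv huv hjuv] at h1
    have h2 := congrFun (congrFun h1 u) v
    rwa [E_apply, E_apply, if_pos ⟨rfl, rfl⟩, if_pos ⟨rfl, rfl⟩] at h2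

lemma edge_facts {i j : Fin n} (hij : ρ i j) (hne : i ≠ j) :
    J.f i j 1 ≠ 0 ∧ (∀ c, J.f i j c = J.f i j 1 * J.d i c) ∧ J.d i = J.d j ∧
      (∀ x y, J.d i (x+y) = J.d i x + J.d i y) := by
  obtain ⟨u, v, hs, hsh⟩ := J.edge_struct hij hne
  have hf1 : J.f i j 1 ≠ 0 := J.f_ne_zero hij hne one_ne_zero
  obtain ⟨l1, l2⟩ := J.d_link hij hne hs hsh
  have hd2 : J.d i 2 = 2 := by
    have e1 := l1 2
    rw [show (2:ℂ)/2 = 1 by norm_num] at e1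
    have h3 : (J.d i 2 - 2) * J.f i j 1 = 0 := by linear_combination -2 * e1
    rcases mul_eq_zero.mp h3 with h | h
    · linear_combination h
    · exact absurd h hf1
  have hfc : ∀ c, J.f i j c = J.f i j 1 * J.d i c := by
    intro c
    have e1 := l1 (2*c)
    rw [show (2*c)/2 = c from by ring] at e1
    rw [e1, J.d_mul, hd2]
    ring
  have hdd : J.d i = J.d j := by
    funext c
    have e1 := l1 c
    have e2 := l2 c
    have h3 : (J.d i c - J.d j c) * J.f i j 1 = 0 := by linear_combination 2*e2 - 2*e1
    rcases mul_eq_zero.mp h3 with h | h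
    · linear_combination h
    · exact absurd h hf1
  refine ⟨hf1, hfc, hdd, ?_⟩
  intro x y
  have h4 := J.f_add hij hne hs hsh x y
  have h5 : J.f i j 1 * (J.d i (x+y) - J.d i x - J.d i y) = 0 := by
    linear_combination h4 - hfc (x+y) + hfc x + hfc y
  rcases mul_eq_zero.mp h5 with h | h
  · exact absurd h hf1
  · linear_combination h


lemma d_add (hnb : ∀ i, ∃ k, k ≠ i ∧ (ρ i k ∨ ρ k i)) (i : Fin n) :
    ∀ x y, J.d i (x + y) = J.d i x + J.d i y := by
  obtain ⟨k, hk, hor⟩ := hnb i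
  rcases hor with h | h
  · exact (J.edge_facts h (Ne.symm hk)).2.2.2
  · have hf := J.edge_facts h hk
    intro x y
    rw [← hf.2.2.1]
    exact hf.2.2.2 x y

lemma d_eq_adj {i j : Fin n} (hne : i ≠ j) (hadj : ρ i j ∨ ρ j i) : J.d i = J.d j := by
  rcases hadj with h | h
  · exact (J.edge_facts h hne).2.2.1
  · exact ((J.edge_facts h (Ne.symm hne)).2.2.1).symm

lemma d_eq_central {i j : Fin n} (h : centralRel ρ i j) : J.d i = J.d j := by
  induction h with
  | refl => rfl
  | @tail b c hab hbc ih =>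
    by_cases hbc' : b = c
    · rw [← hbc']; exact ih
    · exact ih.trans (J.d_eq_adj hbc' hbc)

lemma sideA {i j k : Fin n} (hij : ρ i j) (hik : ρ i k) (hneij : i ≠ j) (hneik : i ≠ k)
    (hkj : k ≠ j) : (J.Tr i j ↔ J.Tr i k) := by
  have hmem1 := E_mem_S i j (1:ℂ) hij
  have hmem2 := E_mem_S i k (1:ℂ) hik
  have horth : njord (E i j (1:ℂ)) (E i k 1) = 0 := G0 (Ne.symm hneij) (Ne.symm hneik) 1 1
  have himg := J.jorth hmem1 hmem2 horth
  constructor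
  · intro h1
    by_contra h2
    rw [J.shape_tr hij hneij h1, J.shape_id hik hneik h2, G1 hkj] at himg
    have h3 := congrFun (congrFun himg j) k
    rw [E_apply, if_pos ⟨rfl, rfl⟩, Matrix.zero_apply] at h3
    have hprod : J.f i j 1 * J.f i k 1 = 0 := by linear_combination 2 * h3
    rcases mul_eq_zero.mp hprod with h | h
    · exact (J.f_ne_zero hij hneij one_ne_zero) h
    · exact (J.f_ne_zero hik hneik one_ne_zero) h
  · intro h1
    by_contra h2
    rw [J.shape_id hij hneij h2, J.shape_tr hik hneik h1, G2 hkj] at himg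
    have h3 := congrFun (congrFun himg k) j
    rw [E_apply, if_pos ⟨rfl, rfl⟩, Matrix.zero_apply] at h3
    have hprod : J.f i j 1 * J.f i k 1 = 0 := by linear_combination 2 * h3
    rcases mul_eq_zero.mp hprod with h | h
    · exact (J.f_ne_zero hij hneij one_ne_zero) h
    · exact (J.f_ne_zero hik hneik one_ne_zero) h

lemma sideB {i j k : Fin n} (hij : ρ i j) (hkj : ρ k j) (hneij : i ≠ j) (hnekj : k ≠ j)
    (hki : k ≠ i) : (J.Tr i j ↔ J.Tr k j) := by
  have hmem1 := E_mem_S i j (1:ℂ) hij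
  have hmem2 := E_mem_S k j (1:ℂ) hkj
  have horth : njord (E i j (1:ℂ)) (E k j 1) = 0 :=
    G0 (fun h => hnekj h.symm) (fun h => hneij h.symm) 1 1
  have himg := J.jorth hmem1 hmem2 horth
  constructor
  · intro h1
    by_contra h2
    rw [J.shape_tr hij hneij h1, J.shape_id hkj hnekj h2, G2 hki] at himg
    have h3 := congrFun (congrFun himg k) i
    rw [E_apply, if_pos ⟨rfl, rfl⟩, Matrix.zero_apply] at h3
    have hprod : J.f i j 1 * J.f k j 1 = 0 := by linear_combination 2 * h3
    rcases mul_eq_zero.mp hprod with h | h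
    · exact (J.f_ne_zero hij hneij one_ne_zero) h
    · exact (J.f_ne_zero hkj hnekj one_ne_zero) h
  · intro h1
    by_contra h2
    rw [J.shape_id hij hneij h2, J.shape_tr hkj hnekj h1, G1 hki] at himg
    have h3 := congrFun (congrFun himg i) k
    rw [E_apply, if_pos ⟨rfl, rfl⟩, Matrix.zero_apply] at h3
    have hprod : J.f i j 1 * J.f k j 1 = 0 := by linear_combination 2 * h3
    rcases mul_eq_zero.mp hprod with h | h
    · exact (J.f_ne_zero hij hneij one_ne_zero) h
    · exact (J.f_ne_zero hkj hnekj one_ne_zero) h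

lemma sideC {i j k : Fin n} (hij : ρ i j) (hjk : ρ j k) (hneij : i ≠ j) (hnejk : j ≠ k)
    (hik : i ≠ k) : (J.Tr i j ↔ J.Tr j k) := by
  have hmem1 := E_mem_S i j (1:ℂ) hij
  have hmem2 := E_mem_S j k (1:ℂ) hjk
  have hsrc : njord (E i j (1:ℂ)) (E j k 1) = E i k (1/2 : ℂ) := by
    rw [G1 (fun h => hik h.symm)]
    norm_num
  have himg := J.jord _ hmem1 _ hmem2
  rw [hsrc] at himg
  have hnz : J.ψ (E i k (1/2 : ℂ)) ≠ 0 :=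
    J.psi_ne_zero (E_mem_S i k _ (J.htrans _ _ _ hij hjk)) (E_ne_zero (by norm_num))
  constructor
  · intro h1
    by_contra h2
    rw [J.shape_tr hij hneij h1, J.shape_id hjk hnejk h2,
      G0 hneij (fun h => hnejk h.symm)] at himg
    exact hnz himg
  · intro h1
    by_contra h2
    rw [J.shape_id hij hneij h2, J.shape_tr hjk hnejk h1,
      G0 hnejk (Ne.symm hneij)] at himg
    exact hnz himg

lemma sideD {i j : Fin n} (hij : ρ i j) (hji : ρ j i) (hne : i ≠ j) :
    (J.Tr i j ↔ J.Tr j i) := by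
  have hmem1 := E_mem_S i j (1:ℂ) hij
  have hmem2 := E_mem_S j i (1:ℂ) hji
  have hsrc : njord (E i j (1:ℂ)) (E j i 1) = E i i (1/2 : ℂ) + E j j (1/2 : ℂ) := by
    rw [G3 hne]
    norm_num
  have himg := J.jord _ hmem1 _ hmem2
  rw [hsrc] at himg
  have hnz : J.ψ (E i i (1/2 : ℂ) + E j j (1/2 : ℂ)) ≠ 0 := by
    apply J.psi_ne_zero (add_mem_S (E_mem_S _ _ _ (J.hrefl i)) (E_mem_S _ _ _ (J.hrefl j)))
    intro h0
    have := congrFun (congrFun h0 i) i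
    rw [Matrix.add_apply, E_apply, E_apply, if_pos ⟨rfl, rfl⟩,
      if_neg (fun hh : j = i ∧ j = i => hne hh.1.symm), Matrix.zero_apply] at this
    norm_num at this
  constructor
  · intro h1
    by_contra h2
    rw [J.shape_tr hij hne h1, J.shape_id hji (Ne.symm hne) h2,
      njord_uv_uv (Ne.symm hne)] at himg
    exact hnz himg
  · intro h1
    by_contra h2
    rw [J.shape_id hij hne h2, J.shape_tr hji (Ne.symm hne) h1,
      njord_uv_uv hne] at himg
    exact hnz himg

/-- any two `ρ`-edges sharing a vertex have the same side -/
lemma side_unique {i j k l : Fin n}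
    (hij : ρ i j) (hkl : ρ k l) (hneij : i ≠ j) (hnekl : k ≠ l)
    (hshare : i = k ∨ i = l ∨ j = k ∨ j = l) : (J.Tr i j ↔ J.Tr k l) := by
  rcases hshare with h | h | h | h
  · rw [← h] at hkl hnekl ⊢
    by_cases hlj : l = j
    · rw [hlj]
    · exact J.sideA hij hkl hneij hnekl hlj
  · rw [← h] at hkl hnekl ⊢
    by_cases hkj : k = j
    · rw [hkj] at hkl hnekl ⊢
      exact J.sideD hij hkl hneij
    · exact (J.sideC hkl hij hnekl hneij hkj).symm
  · rw [← h] at hkl hnekl ⊢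
    by_cases hli : l = i
    · rw [hli] at hkl hnekl ⊢
      exact J.sideD hij hkl hneij
    · exact J.sideC hij hkl hneij hnekl (fun hh => hli hh.symm)
  · rw [← h] at hkl hnekl ⊢
    by_cases hki : k = i
    · rw [hki]
    · exact J.sideB hij hkl hneij hnekl hki


lemma d_div2 (hnb : ∀ i, ∃ k, k ≠ i ∧ (ρ i k ∨ ρ k i)) (i : Fin n) (c : ℂ) :
    J.d i (c/2) = J.d i c / 2 := by
  have ha := J.d_add hnb i
  have h2 : J.d i 2 = 2 := by
    have h := ha 1 1
    rw [J.d_one] at h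
    norm_num at h
    exact h
  have h3 : J.d i c = 2 * J.d i (c/2) := by
    conv_lhs => rw [show c = 2 * (c/2) from by ring]
    rw [J.d_mul, h2]
  rw [h3]
  ring

lemma d_half_one (hnb : ∀ i, ∃ k, k ≠ i ∧ (ρ i k ∨ ρ k i)) (i : Fin n) :
    J.d i (1/2 : ℂ) = 1/2 := by
  rw [J.d_div2 hnb, J.d_one]

lemma diagsum_ii {i j : Fin n} (hne : i ≠ j) (a b : ℂ) : (E i i a + E j j b) i i = a := by
  rw [Matrix.add_apply, E_apply, E_apply, if_pos ⟨rfl, rfl⟩,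
    if_neg (fun hh : j = i ∧ j = i => hne hh.1.symm), add_zero]

lemma diagsum_ii' {i j : Fin n} (hne : i ≠ j) (a b : ℂ) : (E j j b + E i i a) i i = a := by
  rw [Matrix.add_apply, E_apply, E_apply, if_neg (fun hh : j = i ∧ j = i => hne hh.1.symm),
    if_pos ⟨rfl, rfl⟩, zero_add]

lemma diag_pair {i j : Fin n} (hne : i ≠ j) (e : ℂ) :
    J.ψ (E i i e + E j j e) = E i i (J.d i e) + E j j (J.d j e) := by
  set V := E i i e + E j j e with hV
  have hVmem : V ∈ structuralMatrixAlgebra ρ :=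
    add_mem_S (E_mem_S _ _ _ (J.hrefl i)) (E_mem_S _ _ _ (J.hrefl j))
  set R := J.ψ V with hRdef
  have hkill : ∀ k, k ≠ i → k ≠ j → njord (E k k 1) R = 0 := by
    intro k hk1 hk2
    have hsrc : njord (E k k (1:ℂ)) V = 0 := by
      rw [hV, njord_add_right, njord_unit_other hk1 hk1, njord_unit_other hk2 hk2, add_zero]
    have := J.jord _ (E_mem_S k k 1 (J.hrefl k)) V hVmem
    rw [hsrc, J.zero, J.unit] at this
    exact this.symm
  have hbi : njord (E i i 1) R = E i i (J.d i e) := by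
    have hsrc : njord (E i i (1:ℂ)) V = E i i e := by
      rw [hV, njord_add_right, G4, njord_unit_other hne hne, add_zero, one_mul]
    have := J.jord _ (E_mem_S i i 1 (J.hrefl i)) V hVmem
    rw [hsrc, J.unit, J.diag_shape] at this
    exact this.symm
  have hbj : njord (E j j 1) R = E j j (J.d j e) := by
    have hsrc : njord (E j j (1:ℂ)) V = E j j e := by
      rw [hV, njord_add_right, njord_unit_other (Ne.symm hne) (Ne.symm hne), G4, zero_add, one_mul]
    have := J.jord _ (E_mem_S j j 1 (J.hrefl j)) V hVmem
    rw [hsrc, J.unit, J.diag_shape] at this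
    exact this.symm
  obtain ⟨hbi1, hbi2, hbi3⟩ := njord_unit_eq_facts hbi
  obtain ⟨hbj1, hbj2, hbj3⟩ := njord_unit_eq_facts hbj
  ext p q
  rw [Matrix.add_apply, E_apply, E_apply]
  by_cases hpi : i = p
  · by_cases hqi : i = q
    · rw [if_pos ⟨hpi, hqi⟩, if_neg (fun hh => hne (hpi.trans hh.1.symm)), add_zero,
        ← hpi, ← hqi, hbi1, E_apply, if_pos ⟨rfl, rfl⟩]
    · rw [if_neg (fun hh => hqi hh.2), if_neg (fun hh => hne (hpi.trans hh.1.symm)), add_zero,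
        ← hpi, hbi2 q (fun hh => hqi hh.symm), E_apply, if_neg (fun hh => hqi hh.2), mul_zero]
  · rw [if_neg (fun hh => hpi hh.1)]
    by_cases hpj : j = p
    · by_cases hqj : j = q
      · rw [if_pos ⟨hpj, hqj⟩, zero_add, ← hpj, ← hqj, hbj1, E_apply, if_pos ⟨rfl, rfl⟩]
      · rw [if_neg (fun hh => hqj hh.2), add_zero, ← hpj,
          hbj2 q (fun hh => hqj hh.symm), E_apply, if_neg (fun hh => hqj hh.2), mul_zero]
    · rw [if_neg (fun hh => hpj hh.1), add_zero]
      exact kill_row (hkill p (fun hh => hpi hh.symm) (fun hh => hpj hh.symm)) q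

lemma ginv (hnb : ∀ i, ∃ k, k ≠ i ∧ (ρ i k ∨ ρ k i)) {i j : Fin n}
    (hij : ρ i j) (hji : ρ j i) (hne : i ≠ j) :
    J.f i j 1 * J.f j i 1 = 1 := by
  have hsrc : njord (E i j (1:ℂ)) (E j i 1) = E i i (1/2 : ℂ) + E j j (1/2 : ℂ) := by
    rw [G3 hne]
    norm_num
  have himg := J.jord _ (E_mem_S i j 1 hij) _ (E_mem_S j i 1 hji)
  rw [hsrc, J.diag_pair hne] at himg
  have hhalf : J.d i (1/2 : ℂ) = 1/2 := J.d_half_one hnb i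
  by_cases hT : J.Tr i j
  · have hT' : J.Tr j i := (J.sideD hij hji hne).mp hT
    rw [J.shape_tr hij hne hT, J.shape_tr hji (Ne.symm hne) hT', G3 (Ne.symm hne)] at himg
    have h3 := congrFun (congrFun himg i) i
    rw [diagsum_ii hne, diagsum_ii' hne] at h3
    rw [hhalf] at h3
    linear_combination -2 * h3
  · have hT' : ¬ J.Tr j i := fun h => hT ((J.sideD hij hji hne).mpr h)
    rw [J.shape_id hij hne hT, J.shape_id hji (Ne.symm hne) hT', G3 hne] at himg
    have h3 := congrFun (congrFun himg i) i
    rw [diagsum_ii hne, diagsum_ii hne] at h3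
    rw [hhalf] at h3
    linear_combination -2 * h3

lemma gtrans (hnb : ∀ i, ∃ k, k ≠ i ∧ (ρ i k ∨ ρ k i)) {i j k : Fin n}
    (hij : ρ i j) (hjk : ρ j k) (hneij : i ≠ j) (hnejk : j ≠ k) (hneik : i ≠ k) :
    J.f i j 1 * J.f j k 1 = J.f i k 1 := by
  have hik : ρ i k := J.htrans _ _ _ hij hjk
  have hsrc : njord (E i j (1:ℂ)) (E j k 1) = E i k (1/2 : ℂ) := by
    rw [G1 (fun h => hneik h.symm)]
    norm_num
  have himg := J.jord _ (E_mem_S i j 1 hij) _ (E_mem_S j k 1 hjk)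
  rw [hsrc] at himg
  have hfik := (J.edge_facts hik hneik).2.1 (1/2 : ℂ)
  have hhalf : J.d i (1/2 : ℂ) = 1/2 := J.d_half_one hnb i
  by_cases hT : J.Tr i j
  · have hT2 : J.Tr j k := (J.sideC hij hjk hneij hnejk hneik).mp hT
    have hT3 : J.Tr i k := (J.side_unique hij hik hneij hneik (Or.inl rfl)).mp hT
    rw [J.shape_tr hij hneij hT, J.shape_tr hjk hnejk hT2, J.shape_tr hik hneik hT3,
      G2 (Ne.symm hneik)] at himg
    have h3 := congrFun (congrFun himg k) i
    rw [E_apply, E_apply, if_pos ⟨rfl, rfl⟩, if_pos ⟨rfl, rfl⟩] at h3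
    rw [hfik, hhalf] at h3
    linear_combination -2 * h3
  · have hT2 : ¬ J.Tr j k := fun h => hT ((J.sideC hij hjk hneij hnejk hneik).mpr h)
    have hT3 : ¬ J.Tr i k := fun h => hT ((J.side_unique hij hik hneij hneik (Or.inl rfl)).mpr h)
    rw [J.shape_id hij hneij hT, J.shape_id hjk hnejk hT2, J.shape_id hik hneik hT3,
      G1 (fun h => hneik h.symm)] at himg
    have h3 := congrFun (congrFun himg i) k
    rw [E_apply, E_apply, if_pos ⟨rfl, rfl⟩, if_pos ⟨rfl, rfl⟩] at h3
    rw [hfik, hhalf] at h3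
    linear_combination -2 * h3


lemma both_form {i j : Fin n} (hij : ρ i j) (hji : ρ j i) (hne : i ≠ j) (c d : ℂ) :
    J.ψ (E i j c + E j i d) =
      E i j (J.ψ (E i j c + E j i d) i j) + E j i (J.ψ (E i j c + E j i d) j i) := by
  set W := E i j c + E j i d with hW
  have hWmem : W ∈ structuralMatrixAlgebra ρ :=
    add_mem_S (E_mem_S _ _ _ hij) (E_mem_S _ _ _ hji)
  set R := J.ψ W with hRdef
  have hkill : ∀ k, k ≠ i → k ≠ j → njord (E k k 1) R = 0 := by
    intro k hk1 hk2
    have hsrc : njord (E k k (1:ℂ)) W = 0 := by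
      rw [hW, njord_add_right, njord_unit_other hk1 hk2, njord_unit_other hk2 hk1, add_zero]
    have := J.jord _ (E_mem_S k k 1 (J.hrefl k)) W hWmem
    rw [hsrc, J.zero, J.unit] at this
    exact this.symm
  have himg_eq : njord (E i i 1) R = njord (E j j 1) R := by
    have hsrc1 : njord (E i i (1:ℂ)) W = E i j (c/2) + E j i (d/2) := by
      rw [hW, njord_add_right, njord_unit_uv hne (Or.inl rfl),
        njord_unit_uv (Ne.symm hne) (Or.inr rfl)]
    have hsrc2 : njord (E j j (1:ℂ)) W = E i j (c/2) + E j i (d/2) := by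
      rw [hW, njord_add_right, njord_unit_uv hne (Or.inr rfl),
        njord_unit_uv (Ne.symm hne) (Or.inl rfl)]
    have h1 := J.jord _ (E_mem_S i i 1 (J.hrefl i)) W hWmem
    have h2 := J.jord _ (E_mem_S j j 1 (J.hrefl j)) W hWmem
    rw [hsrc1, J.unit] at h1
    rw [hsrc2, J.unit] at h2
    exact h1.symm.trans h2
  have hRii : R i i = 0 := by
    have h3 := congrFun (congrFun himg_eq i) i
    rw [njord_unit_apply, njord_unit_apply, if_pos rfl,
      if_neg (show ¬ (j = i) from Ne.symm hne), if_neg (show ¬ (j = i) from Ne.symm hne)] at h3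
    linear_combination h3
  have hRjj : R j j = 0 := by
    have h3 := congrFun (congrFun himg_eq j) j
    rw [njord_unit_apply, njord_unit_apply, if_pos rfl,
      if_neg (show ¬ (i = j) from hne), if_neg (show ¬ (i = j) from hne)] at h3
    linear_combination -h3
  ext p q
  rw [Matrix.add_apply, E_apply, E_apply]
  by_cases hpi : i = p
  · by_cases hqj : j = q
    · rw [if_pos ⟨hpi, hqj⟩, if_neg (fun hh => hne (hpi.trans hh.1.symm)), add_zero,
        ← hpi, ← hqj]
    · by_cases hqi : i = q
      · rw [if_neg (fun hh => hqj hh.2), if_neg (fun hh => hne (hpi.trans hh.1.symm)), add_zero,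
          ← hpi, ← hqi]
        exact hRii
      · rw [if_neg (fun hh => hqj hh.2), if_neg (fun hh => hqi hh.2), add_zero]
        exact kill_col (hkill q (fun hh => hqi hh.symm) (fun hh => hqj hh.symm)) p
  · by_cases hpj : j = p
    · by_cases hqi : i = q
      · rw [if_neg (fun hh => hpi hh.1), if_pos ⟨hpj, hqi⟩, zero_add, ← hpj, ← hqi]
      · by_cases hqj : j = q
        · rw [if_neg (fun hh => hpi hh.1), if_neg (fun hh => hqi hh.2), add_zero,
            ← hpj, ← hqj]
          exact hRjj
        · rw [if_neg (fun hh => hpi hh.1), if_neg (fun hh => hqi hh.2), add_zero]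
          exact kill_col (hkill q (fun hh => hqi hh.symm) (fun hh => hqj hh.symm)) p
    · rw [if_neg (fun hh => hpi hh.1), if_neg (fun hh => hpj hh.1), add_zero]
      exact kill_row (hkill p (fun hh => hpi hh.symm) (fun hh => hpj hh.symm)) q

lemma both_shape_id (hnb : ∀ i, ∃ k, k ≠ i ∧ (ρ i k ∨ ρ k i)) {i j : Fin n}
    (hij : ρ i j) (hji : ρ j i) (hne : i ≠ j) (hT : ¬ J.Tr i j) (c d : ℂ) :
    J.ψ (E i j c + E j i d) =
      E i j (J.f i j 1 * J.d i c) + E j i (J.f j i 1 * J.d i d) := by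
  have hWmem : (E i j c + E j i d) ∈ structuralMatrixAlgebra ρ :=
    add_mem_S (E_mem_S _ _ _ hij) (E_mem_S _ _ _ hji)
  have hform := J.both_form hij hji hne c d
  set R := J.ψ (E i j c + E j i d) with hRdef
  have hTji : ¬ J.Tr j i := fun h => hT ((J.sideD hij hji hne).mpr h)
  have hinv := J.ginv hnb hij hji hne
  have hinv' : J.f j i 1 * J.f i j 1 = 1 := by linear_combination hinv
  have hp : R i j = J.f i j 1 * J.d i c := by
    have hsrc : njord (E i j c + E j i d) (E j i 1) = E i i (c/2) + E j j (c/2) := by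
      rw [njord_add_left, G3 hne, njord_uv_uv (Ne.symm hne), add_zero,
        show (c*1/2 : ℂ) = c/2 from by ring]
    have himg := J.jord _ hWmem _ (E_mem_S j i 1 hji)
    rw [hsrc, J.diag_pair hne, J.shape_id hji (Ne.symm hne) hTji, ← hRdef, hform,
      njord_add_left, G3 hne, njord_uv_uv (Ne.symm hne), add_zero] at himg
    have h3 := congrFun (congrFun himg i) i
    rw [diagsum_ii hne, diagsum_ii hne] at h3
    rw [J.d_div2 hnb] at h3
    have h5 : R i j * J.f j i 1 = J.d i c := by linear_combination -2 * h3
    linear_combination (J.f i j 1) * h5 - (R i j) * hinv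
  have hq : R j i = J.f j i 1 * J.d i d := by
    have hsrc : njord (E i j c + E j i d) (E i j 1) = E j j (d/2) + E i i (d/2) := by
      rw [njord_add_left, njord_uv_uv hne, zero_add, G3 (Ne.symm hne),
        show (d*1/2 : ℂ) = d/2 from by ring]
    have himg := J.jord _ hWmem _ (E_mem_S i j 1 hij)
    rw [hsrc, J.diag_pair (Ne.symm hne), J.shape_id hij hne hT, ← hRdef, hform,
      njord_add_left, njord_uv_uv hne, zero_add, G3 (Ne.symm hne)] at himg
    have h3 := congrFun (congrFun himg i) i
    rw [diagsum_ii' hne, diagsum_ii' hne] at h3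
    rw [J.d_div2 hnb] at h3
    have h5 : R j i * J.f i j 1 = J.d i d := by linear_combination -2 * h3
    linear_combination (J.f j i 1) * h5 - (R j i) * hinv'
  rw [hform, hp, hq]

lemma both_shape_tr (hnb : ∀ i, ∃ k, k ≠ i ∧ (ρ i k ∨ ρ k i)) {i j : Fin n}
    (hij : ρ i j) (hji : ρ j i) (hne : i ≠ j) (hT : J.Tr i j) (c d : ℂ) :
    J.ψ (E i j c + E j i d) =
      E j i (J.f i j 1 * J.d i c) + E i j (J.f j i 1 * J.d i d) := by
  have hWmem : (E i j c + E j i d) ∈ structuralMatrixAlgebra ρ :=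
    add_mem_S (E_mem_S _ _ _ hij) (E_mem_S _ _ _ hji)
  have hform := J.both_form hij hji hne c d
  set R := J.ψ (E i j c + E j i d) with hRdef
  have hTji : J.Tr j i := (J.sideD hij hji hne).mp hT
  have hinv := J.ginv hnb hij hji hne
  have hinv' : J.f j i 1 * J.f i j 1 = 1 := by linear_combination hinv
  have hp : R i j = J.f j i 1 * J.d i d := by
    have hsrc : njord (E i j c + E j i d) (E i j 1) = E j j (d/2) + E i i (d/2) := by
      rw [njord_add_left, njord_uv_uv hne, zero_add, G3 (Ne.symm hne),
        show (d*1/2 : ℂ) = d/2 from by ring]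
    have himg := J.jord _ hWmem _ (E_mem_S i j 1 hij)
    rw [hsrc, J.diag_pair (Ne.symm hne), J.shape_tr hij hne hT, ← hRdef, hform,
      njord_add_left, G3 hne, njord_uv_uv (Ne.symm hne), add_zero] at himg
    have h3 := congrFun (congrFun himg i) i
    rw [diagsum_ii' hne, diagsum_ii hne] at h3
    rw [J.d_div2 hnb] at h3
    have h5 : R i j * J.f i j 1 = J.d i d := by linear_combination -2 * h3
    linear_combination (J.f j i 1) * h5 - (R i j) * hinv'
  have hq : R j i = J.f i j 1 * J.d i c := by
    have hsrc : njord (E i j c + E j i d) (E j i 1) = E i i (c/2) + E j j (c/2) := by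
      rw [njord_add_left, G3 hne, njord_uv_uv (Ne.symm hne), add_zero,
        show (c*1/2 : ℂ) = c/2 from by ring]
    have himg := J.jord _ hWmem _ (E_mem_S j i 1 hji)
    rw [hsrc, J.diag_pair hne, J.shape_tr hji (Ne.symm hne) hTji, ← hRdef, hform,
      njord_add_left, njord_uv_uv hne, zero_add, G3 (Ne.symm hne)] at himg
    have h3 := congrFun (congrFun himg i) i
    rw [diagsum_ii hne, diagsum_ii' hne] at h3
    rw [J.d_div2 hnb] at h3
    have h5 : R j i * J.f j i 1 = J.d i c := by linear_combination -2 * h3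
    linear_combination (J.f i j 1) * h5 - (R j i) * hinv
  rw [hform, hp, hq]
  exact add_comm _ _


lemma d_div4 (hnb : ∀ i, ∃ k, k ≠ i ∧ (ρ i k ∨ ρ k i)) (i : Fin n) (c : ℂ) :
    J.d i (c/4) = J.d i c / 4 := by
  rw [show c/4 = (c/2)/2 from by ring, J.d_div2 hnb, J.d_div2 hnb]
  ring

lemma d_div8 (hnb : ∀ i, ∃ k, k ≠ i ∧ (ρ i k ∨ ρ k i)) (i : Fin n) (c : ℂ) :
    J.d i (c/8) = J.d i c / 8 := by
  rw [show c/8 = ((c/2)/2)/2 from by ring, J.d_div2 hnb, J.d_div2 hnb, J.d_div2 hnb]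
  ring

lemma entry_diag (hnb : ∀ i, ∃ k, k ≠ i ∧ (ρ i k ∨ ρ k i))
    {X : Matrix (Fin n) (Fin n) ℂ} (hX : X ∈ structuralMatrixAlgebra ρ) (i : Fin n) :
    J.ψ X i i = J.d i (X i i) := by
  obtain ⟨j, hjne, hor⟩ := hnb i
  have hne : i ≠ j := Ne.symm hjne
  set A := J.ψ X with hA
  have hY : J.ψ (njord (E i i 1) X) = njord (E i i 1) A := by
    have := J.jord _ (E_mem_S i i 1 (J.hrefl i)) _ hX
    rwa [J.unit] at this
  set Y := njord (E i i (1:ℂ)) X with hYdef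
  have hYmem : Y ∈ structuralMatrixAlgebra ρ :=
    njord_mem_S J.htrans (E_mem_S i i 1 (J.hrefl i)) hX
  have hYii : Y i i = X i i := by
    rw [hYdef, njord_unit_apply, if_pos rfl]
    ring
  have hYjj : Y j j = 0 := by
    rw [hYdef, njord_unit_apply, if_neg hne, if_neg hne]
    ring
  have hBii : njord (E i i (1:ℂ)) A i i = A i i := by
    rw [njord_unit_apply, if_pos rfl]
    ring
  have hBjj : njord (E i i (1:ℂ)) A j j = 0 := by
    rw [njord_unit_apply, if_neg hne, if_neg hne]
    ring
  rcases hor with hij | hji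
  · -- outgoing edge (i,j)
    have hef := J.edge_facts hij hne
    set Z := njord Y (E i j (1:ℂ)) with hZdef
    have hZmem : Z ∈ structuralMatrixAlgebra ρ :=
      njord_mem_S J.htrans hYmem (E_mem_S i j 1 hij)
    have hZij : Z i j = 1/2 * X i i := by
      rw [hZdef, H3a hne, hYii, hYjj, add_zero]
      ring
    have hZji : Z j i = 0 := by
      rw [hZdef, H3b hne]
    have hsrc := H2 hne Z
    rw [hZij, hZji, show (0:ℂ)/4 = 0 from by norm_num, E_zero, add_zero] at hsrc
    have h1 := J.jord _ (E_mem_S j j 1 (J.hrefl j)) _ hZmem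
    rw [J.unit] at h1
    have h2 := J.jord _ (E_mem_S i i 1 (J.hrefl i)) _
      (njord_mem_S J.htrans (E_mem_S j j 1 (J.hrefl j)) hZmem)
    rw [J.unit, h1, hsrc, H2 hne (J.ψ Z)] at h2
    have hZpsi := J.jord _ hYmem _ (E_mem_S i j 1 hij)
    rw [hY] at hZpsi
    have hco : J.f i j (1/2 * X i i / 4) = J.f i j 1 * J.d i (X i i) / 8 := by
      rw [hef.2.1, show (1/2 * X i i / 4 : ℂ) = (X i i)/8 from by ring, J.d_div8 hnb]
      ring
    by_cases hT : J.Tr i j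
    · rw [J.shape_tr hij hne hT] at hZpsi h2
      have hψZji : J.ψ Z j i = 1/2 * J.f i j 1 * A i i := by
        rw [hZpsi, H3a (Ne.symm hne), hBjj, hBii, zero_add]
      have h3 := congrFun (congrFun h2 j) i
      rw [Matrix.add_apply, E_apply, E_apply, E_apply, if_pos ⟨rfl, rfl⟩,
        if_neg (fun hh : i = j ∧ j = i => hne hh.1), if_pos ⟨rfl, rfl⟩, zero_add,
        hψZji, hco] at h3
      have h5 : J.f i j 1 * (A i i - J.d i (X i i)) = 0 := by linear_combination -8 * h3
      rcases mul_eq_zero.mp h5 with h6 | h6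
      · exact absurd h6 hef.1
      · linear_combination h6
    · rw [J.shape_id hij hne hT] at hZpsi h2
      have hψZij : J.ψ Z i j = 1/2 * J.f i j 1 * A i i := by
        rw [hZpsi, H3a hne, hBii, hBjj, add_zero]
      have h3 := congrFun (congrFun h2 i) j
      rw [Matrix.add_apply, E_apply, E_apply, E_apply, if_pos ⟨rfl, rfl⟩,
        if_neg (fun hh : j = i ∧ i = j => hne hh.2), if_pos ⟨rfl, rfl⟩, add_zero,
        hψZij, hco] at h3
      have h5 : J.f i j 1 * (A i i - J.d i (X i i)) = 0 := by linear_combination -8 * h3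
      rcases mul_eq_zero.mp h5 with h6 | h6
      · exact absurd h6 hef.1
      · linear_combination h6
  · -- incoming edge (j,i)
    have hef := J.edge_facts hji (Ne.symm hne)
    have hdji : J.d j = J.d i := hef.2.2.1
    set Z := njord Y (E j i (1:ℂ)) with hZdef
    have hZmem : Z ∈ structuralMatrixAlgebra ρ :=
      njord_mem_S J.htrans hYmem (E_mem_S j i 1 hji)
    have hZji : Z j i = 1/2 * X i i := by
      rw [hZdef, H3a (Ne.symm hne), hYii, hYjj, zero_add]
      ring
    have hZij : Z i j = 0 := by
      rw [hZdef, H3b (Ne.symm hne)]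
    have hsrc := H2 hne Z
    rw [hZij, hZji, show (0:ℂ)/4 = 0 from by norm_num, E_zero, zero_add] at hsrc
    have h1 := J.jord _ (E_mem_S j j 1 (J.hrefl j)) _ hZmem
    rw [J.unit] at h1
    have h2 := J.jord _ (E_mem_S i i 1 (J.hrefl i)) _
      (njord_mem_S J.htrans (E_mem_S j j 1 (J.hrefl j)) hZmem)
    rw [J.unit, h1, hsrc, H2 hne (J.ψ Z)] at h2
    have hZpsi := J.jord _ hYmem _ (E_mem_S j i 1 hji)
    rw [hY] at hZpsi
    have hco : J.f j i (1/2 * X i i / 4) = J.f j i 1 * J.d i (X i i) / 8 := by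
      rw [hef.2.1, show (1/2 * X i i / 4 : ℂ) = (X i i)/8 from by ring, ← hdji, J.d_div8 hnb]
      ring
    by_cases hT : J.Tr j i
    · rw [J.shape_tr hji (Ne.symm hne) hT] at hZpsi h2
      have hψZij : J.ψ Z i j = 1/2 * J.f j i 1 * A i i := by
        rw [hZpsi, H3a hne, hBii, hBjj, add_zero]
      have h3 := congrFun (congrFun h2 i) j
      rw [Matrix.add_apply, E_apply, E_apply, E_apply, if_pos ⟨rfl, rfl⟩,
        if_pos ⟨rfl, rfl⟩, if_neg (fun hh : j = i ∧ i = j => hne hh.2), add_zero,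
        hψZij, hco] at h3
      have h5 : J.f j i 1 * (A i i - J.d i (X i i)) = 0 := by linear_combination -8 * h3
      rcases mul_eq_zero.mp h5 with h6 | h6
      · exact absurd h6 hef.1
      · linear_combination h6
    · rw [J.shape_id hji (Ne.symm hne) hT] at hZpsi h2
      have hψZji : J.ψ Z j i = 1/2 * J.f j i 1 * A i i := by
        rw [hZpsi, H3a (Ne.symm hne), hBjj, hBii, zero_add]
      have h3 := congrFun (congrFun h2 j) i
      rw [Matrix.add_apply, E_apply, E_apply, E_apply, if_pos ⟨rfl, rfl⟩,
        if_neg (fun hh : i = j ∧ j = i => hne hh.1), if_pos ⟨rfl, rfl⟩, zero_add,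
        hψZji, hco] at h3
      have h5 : J.f j i 1 * (A i i - J.d i (X i i)) = 0 := by linear_combination -8 * h3
      rcases mul_eq_zero.mp h5 with h6 | h6
      · exact absurd h6 hef.1
      · linear_combination h6


lemma offsum_pq {p q : Fin n} (hne : p ≠ q) (a b : ℂ) : (E p q a + E q p b) p q = a := by
  rw [Matrix.add_apply, E_apply, E_apply, if_pos ⟨rfl, rfl⟩,
    if_neg (fun hh : q = p ∧ p = q => hne hh.2), add_zero]

lemma entry_off (hnb : ∀ i, ∃ k, k ≠ i ∧ (ρ i k ∨ ρ k i))
    {X : Matrix (Fin n) (Fin n) ℂ} (hX : X ∈ structuralMatrixAlgebra ρ)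
    {p q : Fin n} (hne : p ≠ q) :
    ((¬ ρ p q ∧ ¬ ρ q p) → J.ψ X p q = 0) ∧
    (ρ p q → ¬ J.Tr p q → J.ψ X p q = J.f p q 1 * J.d p (X p q)) ∧
    (ρ p q → ¬ ρ q p → J.Tr p q → J.ψ X p q = 0) ∧
    (ρ q p → ¬ ρ p q → ¬ J.Tr q p → J.ψ X p q = 0) ∧
    (ρ q p → J.Tr q p → J.ψ X p q = J.f q p 1 * J.d q (X q p)) := by
  have h1 := J.jord _ (E_mem_S q q 1 (J.hrefl q)) _ hX
  rw [J.unit] at h1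
  have h2 := J.jord _ (E_mem_S p p 1 (J.hrefl p)) _
    (njord_mem_S J.htrans (E_mem_S q q 1 (J.hrefl q)) hX)
  rw [J.unit, h1, H2 hne X, H2 hne (J.ψ X)] at h2
  refine ⟨?_, ?_, ?_, ?_, ?_⟩
  · rintro ⟨hnpq, hnqp⟩
    rw [hX p q hnpq, hX q p hnqp, show (0:ℂ)/4 = 0 from by norm_num, E_zero, E_zero,
      add_zero, J.zero] at h2
    have h3 := congrFun (congrFun h2.symm p) q
    rw [offsum_pq hne, Matrix.zero_apply] at h3
    linear_combination 4 * h3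
  · intro hpq hT
    by_cases hqp : ρ q p
    · rw [J.both_shape_id hnb hpq hqp hne hT] at h2
      have h3 := congrFun (congrFun h2 p) q
      rw [offsum_pq hne, offsum_pq hne, J.d_div4 hnb] at h3
      linear_combination -4 * h3
    · rw [hX q p hqp, show (0:ℂ)/4 = 0 from by norm_num, E_zero, add_zero,
        J.shape_id hpq hne hT, (J.edge_facts hpq hne).2.1, J.d_div4 hnb] at h2
      have h3 := congrFun (congrFun h2 p) q
      rw [offsum_pq hne, E_apply, if_pos ⟨rfl, rfl⟩] at h3
      linear_combination -4 * h3
  · intro hpq hnqp hT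
    rw [hX q p hnqp, show (0:ℂ)/4 = 0 from by norm_num, E_zero, add_zero,
      J.shape_tr hpq hne hT] at h2
    have h3 := congrFun (congrFun h2 p) q
    rw [offsum_pq hne, E_apply, if_neg (fun hh : q = p ∧ p = q => hne hh.2)] at h3
    linear_combination -4 * h3
  · intro hqp hnpq hT
    rw [hX p q hnpq, show (0:ℂ)/4 = 0 from by norm_num, E_zero, zero_add,
      J.shape_id hqp (Ne.symm hne) hT] at h2
    have h3 := congrFun (congrFun h2 p) q
    rw [offsum_pq hne, E_apply, if_neg (fun hh : q = p ∧ p = q => hne hh.2)] at h3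
    linear_combination -4 * h3
  · intro hqp hT
    by_cases hpq : ρ p q
    · rw [show E p q (X p q/4) + E q p (X q p/4) = E q p (X q p/4) + E p q (X p q/4)
        from add_comm _ _, J.both_shape_tr hnb hqp hpq (Ne.symm hne) hT] at h2
      have h3 := congrFun (congrFun h2 p) q
      rw [offsum_pq hne, offsum_pq hne, J.d_div4 hnb] at h3
      linear_combination -4 * h3
    · rw [hX p q hpq, show (0:ℂ)/4 = 0 from by norm_num, E_zero, zero_add,
        J.shape_tr hqp (Ne.symm hne) hT, (J.edge_facts hqp (Ne.symm hne)).2.1,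
        J.d_div4 hnb] at h2
      have h3 := congrFun (congrFun h2 p) q
      rw [offsum_pq hne, E_apply, if_pos ⟨rfl, rfl⟩] at h3
      linear_combination -4 * h3


lemma master [DecidableRel ρ] (hnb : ∀ i, ∃ k, k ≠ i ∧ (ρ i k ∨ ρ k i)) :
    ∃ g : Fin n → Fin n → ℂ,
      (∀ i j, ρ i j → g i j ≠ 0) ∧
      (∀ i j k, ρ i j → ρ j k → g i j * g j k = g i k) ∧
    ∃ ω : Fin n → (ℂ →+* ℂ),
      (∀ i, Function.Injective (ω i)) ∧
      (∀ i j, centralRel ρ i j → ω i = ω j) ∧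
    ∃ ε : Fin n → Bool,
      (∀ i j, centralRel ρ i j → ε i = ε j) ∧
      ∀ X ∈ structuralMatrixAlgebra ρ,
        J.ψ X = Matrix.of fun p q =>
          if ε p then (if ρ q p then g q p * (ω q) (X q p) else 0)
          else (if ρ p q then g p q * (ω p) (X p q) else 0) := by
  classical
  choose nb hnb12 using hnb
  have hnb1 : ∀ i, nb i ≠ i := fun i => (hnb12 i).1
  have hnb2 : ∀ i, ρ i (nb i) ∨ ρ (nb i) i := fun i => (hnb12 i).2
  have hnb' : ∀ i, ∃ k, k ≠ i ∧ (ρ i k ∨ ρ k i) := fun i => ⟨nb i, hnb1 i, hnb2 i⟩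
  let εf : Fin n → Bool := fun i =>
    if ρ i (nb i) then decide (J.Tr i (nb i)) else decide (J.Tr (nb i) i)
  have hεf : ∀ p q, ρ p q → p ≠ q → (J.Tr p q ↔ εf p = true) := by
    intro p q hpq hne
    show J.Tr p q ↔
      (if ρ p (nb p) then decide (J.Tr p (nb p)) else decide (J.Tr (nb p) p)) = true
    by_cases h : ρ p (nb p)
    · rw [if_pos h, decide_eq_true_eq]
      exact J.side_unique hpq h hne (fun hh => (hnb1 p) hh.symm) (Or.inl rfl)
    · rw [if_neg h, decide_eq_true_eq]
      exact J.side_unique hpq ((hnb2 p).resolve_left h) hne (hnb1 p) (Or.inr (Or.inl rfl))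
  have hεf2 : ∀ p q, ρ p q → p ≠ q → (J.Tr p q ↔ εf q = true) := by
    intro p q hpq hne
    show J.Tr p q ↔
      (if ρ q (nb q) then decide (J.Tr q (nb q)) else decide (J.Tr (nb q) q)) = true
    by_cases h : ρ q (nb q)
    · rw [if_pos h, decide_eq_true_eq]
      exact J.side_unique hpq h hne (fun hh => (hnb1 q) hh.symm) (Or.inr (Or.inr (Or.inl rfl)))
    · rw [if_neg h, decide_eq_true_eq]
      exact J.side_unique hpq ((hnb2 q).resolve_left h) hne (hnb1 q)
        (Or.inr (Or.inr (Or.inr rfl)))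
  have hεconst : ∀ i j, centralRel ρ i j → εf i = εf j := by
    intro i j h
    induction h with
    | refl => rfl
    | @tail b c hab hbc ih =>
      by_cases hbc' : b = c
      · rw [← hbc']; exact ih
      · refine ih.trans ?_
        rcases hbc with hr | hr
        · have e1 := hεf b c hr hbc'
          have e2 := hεf2 b c hr hbc'
          cases hb : εf b <;> cases hc : εf c <;> simp_all
        · have e1 := hεf c b hr (fun hh => hbc' hh.symm)
          have e2 := hεf2 c b hr (fun hh => hbc' hh.symm)
          cases hb : εf b <;> cases hc : εf c <;> simp_all
  let g : Fin n → Fin n → ℂ := fun p q => if p = q then 1 else J.f p q 1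
  have hgne : ∀ i j, ρ i j → g i j ≠ 0 := by
    intro i j hij
    show (if i = j then 1 else J.f i j 1) ≠ 0
    split_ifs with h
    · exact one_ne_zero
    · exact J.f_ne_zero hij h one_ne_zero
  have hgtr : ∀ i j k, ρ i j → ρ j k → g i j * g j k = g i k := by
    intro i j k hij hjk
    show (if i = j then 1 else J.f i j 1) * (if j = k then 1 else J.f j k 1)
      = (if i = k then 1 else J.f i k 1)
    by_cases h1 : i = j
    · rw [if_pos h1, one_mul, h1]
    · by_cases h2 : j = k
      · rw [if_pos h2, mul_one, ← h2]
      · by_cases h3 : i = k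
        · rw [if_neg h1, if_neg h2, if_pos h3, ← h3]
          have hji : ρ j i := by rwa [← h3] at hjk
          exact J.ginv hnb' hij hji h1
        · rw [if_neg h1, if_neg h2, if_neg h3]
          exact J.gtrans hnb' hij hjk h1 h2 h3
  let ω : Fin n → ℂ →+* ℂ := fun i =>
    RingHom.mk' ⟨⟨J.d i, J.d_one i⟩, J.d_mul i⟩ (J.d_add hnb' i)
  have hωinj : ∀ i, Function.Injective (ω i) := fun i => (ω i).injective
  have hωconst : ∀ i j, centralRel ρ i j → ω i = ω j := by
    intro i j h
    have hd := J.d_eq_central h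
    refine RingHom.ext fun c => ?_
    exact congrFun hd c
  refine ⟨g, hgne, hgtr, ω, hωinj, hωconst, εf, hεconst, ?_⟩
  intro X hX
  ext p q
  rw [Matrix.of_apply]
  by_cases hpq : p = q
  · rw [← hpq]
    rw [J.entry_diag hnb' hX p]
    have hgpp : g p p = (1:ℂ) := if_pos rfl
    by_cases hε : εf p
    · rw [if_pos hε, if_pos (J.hrefl p), hgpp, one_mul]
      rfl
    · rw [if_neg hε, if_pos (J.hrefl p), hgpp, one_mul]
      rfl
  · obtain ⟨c1, c2, c3, c4, c5⟩ := J.entry_off hnb' hX hpq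
    by_cases hε : εf p
    · rw [if_pos hε]
      by_cases hqp : ρ q p
      · rw [if_pos hqp]
        have hT : J.Tr q p := (hεf2 q p hqp (fun hh => hpq hh.symm)).mpr hε
        rw [c5 hqp hT]
        have hg : g q p = J.f q p 1 := if_neg (fun hh => hpq hh.symm)
        rw [hg]
        rfl
      · rw [if_neg hqp]
        by_cases hpq2 : ρ p q
        · exact c3 hpq2 hqp ((hεf p q hpq2 hpq).mpr hε)
        · exact c1 ⟨hpq2, hqp⟩
    · rw [if_neg hε]
      by_cases hpq2 : ρ p q
      · rw [if_pos hpq2]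
        have hT : ¬ J.Tr p q := fun hh => hε ((hεf p q hpq2 hpq).mp hh)
        rw [c2 hpq2 hT]
        have hg : g p q = J.f p q 1 := if_neg hpq
        rw [hg]
        rfl
      · rw [if_neg hpq2]
        by_cases hqp : ρ q p
        · exact c4 hqp hpq2 (fun hh => hε ((hεf2 q p hqp (fun hh2 => hpq hh2.symm)).mp hh))
        · exact c1 ⟨hpq2, hqp⟩

end JPsi

end NJMS

open NJMS NJMS.JPsi in
/-- Structure of injective maps `φ : A_ρ → M_n(ℂ)` preserving the
normalized Jordan product, when every central class has at least 2 elements: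
there exist an invertible `T`, a transitive map `g : ρ → ℂ^×`, injective ring
endomorphisms `ω_C` of `ℂ` (one per central class), and a choice `ε_C ∈
{identity, transpose}` per central class (`ε i = true` meaning transpose on the
class of `i`), such that `φ(X) = T · (Σ_C (g*(ω_C(P_C X)))^{ε_C}) · T⁻¹`.
Entrywise, the middle matrix is `g i j · ω_{C(i)}(X i j)` at `(i,j) ∈ ρ` for
identity classes, and `g j i · ω_{C(j)}(X j i)` at the transposed position for
transpose classes, and `0` elsewhere. -/
theorem normalized_jordan_map_structure {n : ℕ} (ρ : Fin n → Fin n → Prop)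
    [DecidableRel ρ]
    (hrefl : ∀ i, ρ i i) (htrans : ∀ i j k, ρ i j → ρ j k → ρ i k)
    (hclass : ∀ i : Fin n, ∃ j, j ≠ i ∧ centralRel ρ i j)
    (φ : Matrix (Fin n) (Fin n) ℂ → Matrix (Fin n) (Fin n) ℂ)
    (hinj : Set.InjOn φ (structuralMatrixAlgebra ρ))
    (hjord : ∀ X ∈ structuralMatrixAlgebra ρ, ∀ Y ∈ structuralMatrixAlgebra ρ,
      φ (njord X Y) = njord (φ X) (φ Y)) :
    ∃ T : Matrix (Fin n) (Fin n) ℂ, IsUnit T ∧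
    ∃ g : Fin n → Fin n → ℂ,
      (∀ i j, ρ i j → g i j ≠ 0) ∧
      (∀ i j k, ρ i j → ρ j k → g i j * g j k = g i k) ∧
    ∃ ω : Fin n → (ℂ →+* ℂ),
      (∀ i, Function.Injective (ω i)) ∧
      (∀ i j, centralRel ρ i j → ω i = ω j) ∧
    ∃ ε : Fin n → Bool,
      (∀ i j, centralRel ρ i j → ε i = ε j) ∧
      ∀ X ∈ structuralMatrixAlgebra ρ,
        φ X = T * (Matrix.of fun i j =>
          if ε i then (if ρ j i then g j i * ω j (X j i) else 0)
          else (if ρ i j then g i j * ω i (X i j) else 0)) * T⁻¹ := by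
  classical
  have hnb : ∀ i : Fin n, ∃ k, k ≠ i ∧ (ρ i k ∨ ρ k i) := by
    intro i
    obtain ⟨j, hne, hc⟩ := hclass i
    revert hne
    induction hc with
    | refl => intro h; exact absurd rfl h
    | @tail b c hab hbc ih =>
      intro hci
      by_cases hbi : b = i
      · exact ⟨c, hci, by rwa [hbi] at hbc⟩
      · exact ih hbi
  have h0mem : (0 : Matrix (Fin n) (Fin n) ℂ) ∈ structuralMatrixAlgebra ρ := zero_mem_S
  have hEmem : ∀ i : Fin n, E i i (1:ℂ) ∈ structuralMatrixAlgebra ρ :=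
    fun i => E_mem_S i i 1 (hrefl i)
  set Q := φ 0 with hQdef
  have hQQ : Q * Q = Q := by
    have h := hjord 0 h0mem 0 h0mem
    rw [show njord (0 : Matrix (Fin n) (Fin n) ℂ) 0 = 0 from by simp [njord], njord_self] at h
    exact h.symm
  set P : Fin n → Matrix (Fin n) (Fin n) ℂ := fun i => φ (E i i 1) with hPdef
  have hPdef' : ∀ i, φ (E i i (1:ℂ)) = P i := fun i => rfl
  have hPidem : ∀ i, P i * P i = P i := by
    intro i
    have h := hjord _ (hEmem i) _ (hEmem i)
    rw [G4, one_mul, njord_self, hPdef'] at h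
    exact h.symm
  have hQP : ∀ i, Q * P i = Q ∧ P i * Q = Q := by
    intro i
    have h := hjord 0 h0mem _ (hEmem i)
    rw [show njord (0 : Matrix (Fin n) (Fin n) ℂ) (E i i 1) = 0 from by simp [njord],
      hPdef', ← hQdef] at h
    have h1 : (2:ℂ) • Q = Q * P i + P i * Q := by
      conv_lhs => rw [h]
      rw [njord, smul_smul]
      norm_num
    have e1 : (2:ℂ) • Q = Q * P i + (Q * P i) * Q := by
      have h2 := congrArg (fun M => Q * M) h1
      simp only [Matrix.mul_smul, Matrix.mul_add] at h2
      rw [hQQ, ← Matrix.mul_assoc, hQQ, ← Matrix.mul_assoc] at h2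
      exact h2
    have e2 : (2:ℂ) • Q = (Q * P i) * Q + P i * Q := by
      have h2 := congrArg (fun M => M * Q) h1
      simp only [Matrix.smul_mul, Matrix.add_mul] at h2
      rw [hQQ, Matrix.mul_assoc (P i) Q Q, hQQ] at h2
      exact h2
    have e3 : Q * P i = P i * Q := by
      have h4 := e1.symm.trans e2
      rw [add_comm ((Q * P i) * Q) (P i * Q)] at h4
      exact add_right_cancel h4
    have e4 : Q * P i = Q := by
      have h5 : (2:ℂ) • Q = (2:ℂ) • (Q * P i) := by
        rw [h1, ← e3, ← two_smul ℂ (Q * P i)]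
      exact ((smul_right_injective _ (by norm_num : (2:ℂ) ≠ 0)) h5).symm
    refine ⟨e4, ?_⟩
    rw [← e3]
    exact e4
  have hPPQ : ∀ i j, i ≠ j → P i * P j + P j * P i = (2:ℂ) • Q := by
    intro i j hne
    have h := hjord _ (hEmem i) _ (hEmem j)
    rw [njord_unit_other hne hne, ← hQdef, hPdef', hPdef'] at h
    have h1 : (2:ℂ) • Q = P i * P j + P j * P i := by
      conv_lhs => rw [h]
      rw [njord, smul_smul]
      norm_num
    exact h1.symm
  have hBidem : ∀ i, (P i - Q) * (P i - Q) = P i - Q := by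
    intro i
    have hexp : (P i - Q) * (P i - Q) = P i * P i - P i * Q - Q * P i + Q * Q := by
      noncomm_ring
    rw [hexp, hPidem i, (hQP i).2, (hQP i).1, hQQ]
    abel
  have hBexp : ∀ i j, (P i - Q) * (P j - Q) = P i * P j - Q := by
    intro i j
    have hexp : (P i - Q) * (P j - Q) = P i * P j - P i * Q - Q * P j + Q * Q := by
      noncomm_ring
    rw [hexp, (hQP i).2, (hQP j).1, hQQ]
    abel
  have horthkey : ∀ (e f : Matrix (Fin n) (Fin n) ℂ), e * e = e → f * f = f →
      e * f + f * e = 0 → e * f = 0 := by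
    intro e f hee hff horth
    have h1 : e * f + (e * f) * e = 0 := by
      have h := congrArg (fun M => e * M) horth
      simp only [Matrix.mul_add, Matrix.mul_zero] at h
      rwa [← Matrix.mul_assoc, hee, ← Matrix.mul_assoc] at h
    have h2 : (e * f) * e + f * e = 0 := by
      have h := congrArg (fun M => M * e) horth
      simp only [Matrix.add_mul, Matrix.zero_mul] at h
      rwa [Matrix.mul_assoc f e e, hee] at h
    have h3 : e * f = f * e := by
      have h4 := h1.trans h2.symm
      rw [add_comm ((e * f) * e) (f * e)] at h4
      exact add_right_cancel h4
    have h5 : (2:ℂ) • (e * f) = 0 := by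
      rw [two_smul]
      nth_rewrite 2 [h3]
      exact horth
    rcases smul_eq_zero.mp h5 with h6 | h6
    · exact absurd h6 (by norm_num)
    · exact h6
  have hBorth : ∀ i j, i ≠ j → (P i - Q) * (P j - Q) = 0 := by
    intro i j hne
    refine horthkey _ _ (hBidem i) (hBidem j) ?_
    rw [hBexp i j, hBexp j i]
    have h7 : P i * P j - Q + (P j * P i - Q) = P i * P j + P j * P i - (2:ℂ) • Q := by
      rw [two_smul]
      abel
    rw [h7, hPPQ i j hne, sub_self]
  have hBQ : ∀ i, Q * (P i - Q) = 0 ∧ (P i - Q) * Q = 0 := by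
    intro i
    constructor
    · rw [Matrix.mul_sub, (hQP i).1, hQQ, sub_self]
    · rw [Matrix.sub_mul, (hQP i).2, hQQ, sub_self]
  have hBne : ∀ i, P i - Q ≠ 0 := by
    intro i h
    have hPQ : P i = Q := by rwa [sub_eq_zero] at h
    have h2 := hinj (hEmem i) h0mem hPQ
    have h3 := congrFun (congrFun h2 i) i
    rw [E_apply, if_pos ⟨rfl, rfl⟩, Matrix.zero_apply] at h3
    exact one_ne_zero h3
  have hv : ∀ (M : Matrix (Fin n) (Fin n) ℂ), M ≠ 0 → ∃ w : Fin n → ℂ, M.mulVec w ≠ 0 := by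
    intro M hM
    by_contra hcon
    push_neg at hcon
    apply hM
    ext p q
    have h := hcon (Pi.single q 1)
    rw [Matrix.mulVec_single] at h
    have := congrFun h p
    simpa using this
  have hQ0 : Q = 0 := by
    by_contra hQne
    obtain ⟨wq, hwq⟩ := hv Q hQne
    choose wB hwB using fun i => hv _ (hBne i)
    set F : Option (Fin n) → (Fin n → ℂ) := fun o =>
      Option.elim o (Q.mulVec wq) (fun i => (P i - Q).mulVec (wB i)) with hF
    set Mo : Option (Fin n) → Matrix (Fin n) (Fin n) ℂ := fun o =>
      Option.elim o Q (fun i => P i - Q) with hMo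
    have hMoF : ∀ o o', (Mo o).mulVec (F o') = if o = o' then F o' else 0 := by
      intro o o'
      rcases o with _ | i <;> rcases o' with _ | j <;>
        simp only [hF, hMo, Option.elim, Matrix.mulVec_mulVec]
      · rw [hQQ]
        simp
      · rw [(hBQ j).1, Matrix.zero_mulVec]
        simp
      · rw [(hBQ i).2, Matrix.zero_mulVec]
        simp
      · by_cases hij : i = j
        · subst hij
          rw [hBidem i]
          simp
        · rw [hBorth i j hij, Matrix.zero_mulVec]
          simp [hij]
    have hFne : ∀ o, F o ≠ 0 := by
      intro o
      rcases o with _ | i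
      · exact hwq
      · exact hwB i
    have hline : LinearIndependent ℂ F := by
      rw [Fintype.linearIndependent_iff]
      intro gc hsum o
      have happ := congrArg (fun v => (Mo o).mulVecLin v) hsum
      simp only [map_sum, map_smul, Matrix.mulVecLin_apply, map_zero] at happ
      simp only [hMoF, smul_ite, smul_zero] at happ
      rw [Finset.sum_ite_eq] at happ
      rw [if_pos (Finset.mem_univ o)] at happ
      rcases smul_eq_zero.mp happ with h | h
      · exact h
      · exact absurd h (hFne o)
    have hcard := hline.fintype_card_le_finrank
    rw [Module.finrank_pi] at hcard
    simp [Fintype.card_option] at hcard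
  -- Q = 0 cleanup
  have hPorth : ∀ i j, i ≠ j → P i * P j = 0 := by
    intro i j hne
    have := hBorth i j hne
    rwa [hQ0, sub_zero, sub_zero] at this
  have hPne : ∀ i, P i ≠ 0 := by
    intro i
    have := hBne i
    rwa [hQ0, sub_zero] at this
  choose w hw using fun i => hv _ (hPne i)
  set T : Matrix (Fin n) (Fin n) ℂ := Matrix.of (fun p k => (P k).mulVec (w k) p) with hT
  have hPT : ∀ i, P i * T = T * E i i 1 := by
    intro i
    ext p q
    have hL : (P i * T) p q = ((P i * P q).mulVec (w q)) p := by
      rw [Matrix.mul_apply, ← Matrix.mulVec_mulVec]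
      rfl
    rw [hL, mul_E_apply]
    by_cases hqi : i = q
    · rw [if_pos hqi, ← hqi, hPidem i, mul_one]
      rfl
    · rw [if_neg hqi, hPorth i q (fun hh => hqi hh), Matrix.zero_mulVec]
      rfl
  have hTdet : IsUnit T.det := by
    rw [isUnit_iff_ne_zero]
    intro hdet
    obtain ⟨cvec, hc0, hcv⟩ := (Matrix.exists_mulVec_eq_zero_iff).mpr hdet
    apply hc0
    funext i
    rw [Pi.zero_apply]
    have h1 : (P i).mulVec (T.mulVec cvec) = 0 := by rw [hcv, Matrix.mulVec_zero]
    rw [Matrix.mulVec_mulVec, hPT i, ← Matrix.mulVec_mulVec] at h1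
    have h2 : (E i i (1:ℂ)).mulVec cvec = Pi.single i (cvec i) := by
      funext r
      simp only [Matrix.mulVec, dotProduct]
      by_cases hri : r = i
      · subst hri
        rw [Finset.sum_eq_single r
          (fun b _ hb => by rw [E_apply, if_neg (fun hh => hb hh.2.symm), zero_mul])
          (by simp), E_apply, if_pos ⟨rfl, rfl⟩, one_mul, Pi.single_eq_same]
      · rw [Finset.sum_eq_zero fun b _ => by
          rw [E_apply, if_neg (fun hh => hri hh.1.symm), zero_mul],
          Pi.single_eq_of_ne hri]
    rw [h2] at h1
    have h3 : T.mulVec (Pi.single i (cvec i)) = cvec i • (P i).mulVec (w i) := by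
      rw [Matrix.mulVec_single]
      funext p
      simp only [Pi.smul_apply, op_smul_eq_mul, smul_eq_mul]
      exact mul_comm _ _
    rw [h3] at h1
    rcases smul_eq_zero.mp h1 with h4 | h4
    · exact h4
    · exact absurd h4 (hw i)
  have hTunit : IsUnit T := (Matrix.isUnit_iff_isUnit_det T).mpr hTdet
  have hTT : T * T⁻¹ = 1 := Matrix.mul_nonsing_inv T hTdet
  have hTT' : T⁻¹ * T = 1 := Matrix.nonsing_inv_mul T hTdet
  have cancel : ∀ A : Matrix (Fin n) (Fin n) ℂ, T * (T⁻¹ * A * T) * T⁻¹ = A := by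
    intro A
    rw [← Matrix.mul_assoc, ← Matrix.mul_assoc, hTT, Matrix.one_mul, Matrix.mul_assoc, hTT,
      Matrix.mul_one]
  have key : ∀ A B : Matrix (Fin n) (Fin n) ℂ,
      (T⁻¹ * A * T) * (T⁻¹ * B * T) = T⁻¹ * (A * B) * T := by
    intro A B
    have h : T * (T⁻¹ * (B * T)) = B * T := by
      rw [← Matrix.mul_assoc, hTT, Matrix.one_mul]
    simp only [Matrix.mul_assoc]
    rw [h]
  let J : NJMS.JPsi ρ :=
    { ψ := fun X => T⁻¹ * φ X * T
      hrefl := hrefl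
      htrans := htrans
      jord := by
        intro X hX Y hY
        show T⁻¹ * φ (njord X Y) * T = njord (T⁻¹ * φ X * T) (T⁻¹ * φ Y * T)
        rw [hjord X hX Y hY, njord, njord, key, key, Matrix.mul_smul, Matrix.smul_mul,
          Matrix.mul_add, Matrix.add_mul]
      inj := by
        intro X hX Y hY h
        have h2 := congrArg (fun M => T * M * T⁻¹) h
        simp only at h2
        rw [cancel, cancel] at h2
        exact hinj hX hY h2
      unit := by
        intro i
        show T⁻¹ * φ (E i i 1) * T = E i i 1
        rw [hPdef' i, Matrix.mul_assoc, hPT i, ← Matrix.mul_assoc, hTT', Matrix.one_mul]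
      zero := by
        show T⁻¹ * φ 0 * T = 0
        rw [← hQdef, hQ0, Matrix.mul_zero, Matrix.zero_mul] }
  obtain ⟨g, hg1, hg2, ω, hω1, hω2, ε, hε1, hfin⟩ := J.master hnb
  refine ⟨T, hTunit, g, hg1, hg2, ω, hω1, hω2, ε, hε1, ?_⟩
  intro X hX
  have h := hfin X hX
  have h2 : T⁻¹ * φ X * T = Matrix.of fun p q =>
      if ε p then (if ρ q p then g q p * (ω q) (X q p) else 0)
      else (if ρ p q then g p q * (ω p) (X p q) else 0) := h
  rw [← h2]
  exact (cancel (φ X)).symm
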